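/- Let E be a finite set with symmetric submodular order function. Then there exists a tree-decomposition of E distinguishing any two maximal tangles efficiently such that in each part of the decomposition there lives a maximal tangle. -/

import Mathlib

variable {E : Type*}

/-- `f` is symmetric: `f X = f (E \ X)` for all `X ⊆ E`. -/
def FSymm (f : Set E → ℤ) : Prop := ∀ X : Set E, f X = f Xᶜ

/-- `f` is submodular. -/
def FSubmod (f : Set E → ℤ) : Prop :=
  ∀ X Y : Set E, f (X ∩ Y) + f (X ∪ Y) ≤ f X + f Y

/-- Separations `(A,B)` and `(C,D)` are nested: some side of the first
is contained in some side of the second. -/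
def Nested (A B C D : Set E) : Prop := A ⊆ C ∨ A ⊆ D ∨ B ⊆ C ∨ B ⊆ D

/-- `T` is a tangle of order `k+1`: a set of small sides of separations of
order at most `k`, orienting every separation of order at most `k`, such that
no three small sides cover `E` and the complement of a singleton is never small. -/
def IsTangle (f : Set E → ℤ) (k : ℤ) (T : Set (Set E)) : Prop :=
  (∀ A ∈ T, f A ≤ k) ∧
  (∀ A : Set E, f A ≤ k → A ∈ T ∨ Aᶜ ∈ T) ∧
  (∀ A₁ ∈ T, ∀ A₂ ∈ T, ∀ A₃ ∈ T, A₁ ∪ A₂ ∪ A₃ ≠ Set.univ) ∧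
  (∀ e : E, ({e}ᶜ : Set E) ∉ T)

/-- A tangle is maximal if it is not included in any other tangle. -/
def IsMaximalTangle (f : Set E → ℤ) (T : Set (Set E)) : Prop :=
  (∃ k, IsTangle f k T) ∧
  ∀ T' : Set (Set E), (∃ k, IsTangle f k T') → T ⊆ T' → T' = T

/-- The separation with sides `A`, `Aᶜ` distinguishes the tangles `P` and `Q`. -/
def Distinguishes (A : Set E) (P Q : Set (Set E)) : Prop :=
  (A ∈ P ∧ Aᶜ ∈ Q) ∨ (Aᶜ ∈ P ∧ A ∈ Q)

/-- The separation with sides `A`, `Aᶜ` distinguishes `P` and `Q` efficiently. -/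
def DistinguishesEff (f : Set E → ℤ) (A : Set E) (P Q : Set (Set E)) : Prop :=
  Distinguishes A P Q ∧ ∀ C : Set E, Distinguishes C P Q → f A ≤ f C

variable {V : Type*}

/-- `P` is a partition of `E` into (possibly empty) classes indexed by `V`. -/
def IsPartitionFam (P : V → Set E) : Prop :=
  (∀ x y : V, x ≠ y → Disjoint (P x) (P y)) ∧ (⋃ x, P x) = Set.univ

/-- For an edge `tu` of the decomposition tree `G`, the side `S_t` of the
corresponding separation: the union of the parts over the component of
`G - tu` containing `t`. -/
def treeSide (G : SimpleGraph V) (P : V → Set E) (t u : V) : Set E :=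
  ⋃ x ∈ {x | (G.deleteEdges {s(t, u)}).Reachable t x}, P x

namespace TangleAux

open SimpleGraph

variable {W : Type*}

lemma reach_sup_disjoint {H₁ H₂ : SimpleGraph W} {S₁ S₂ : Set W}
    (h₁ : ∀ a b, H₁.Adj a b → a ∈ S₁ ∧ b ∈ S₁)
    (h₂ : ∀ a b, H₂.Adj a b → a ∈ S₂ ∧ b ∈ S₂)
    (hS : ∀ x, x ∈ S₁ → x ∈ S₂ → False) {a b : W}
    (h : (H₁ ⊔ H₂).Reachable a b) :
    a = b ∨ (H₁.Reachable a b ∧ a ∈ S₁ ∧ b ∈ S₁) ∨ (H₂.Reachable a b ∧ a ∈ S₂ ∧ b ∈ S₂) := by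
  obtain ⟨p⟩ := h
  induction p with
  | nil => exact Or.inl rfl
  | @cons u v w hadj p ih =>
    rcases hadj with ha | ha
    · have hu := h₁ _ _ ha
      rcases ih with rfl | ⟨hr, hv, hw⟩ | ⟨hr, hv, hw⟩
      · exact Or.inr (Or.inl ⟨ha.reachable, hu.1, hu.2⟩)
      · exact Or.inr (Or.inl ⟨ha.reachable.trans hr, hu.1, hw⟩)
      · exact (hS v hu.2 hv).elim
    · have hu := h₂ _ _ ha
      rcases ih with rfl | ⟨hr, hv, hw⟩ | ⟨hr, hv, hw⟩
      · exact Or.inr (Or.inr ⟨ha.reachable, hu.1, hu.2⟩)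
      · exact (hS v hv hu.2).elim
      · exact Or.inr (Or.inr ⟨ha.reachable.trans hr, hu.1, hw⟩)

lemma reach_sup_edge {H : SimpleGraph W} {t₁ t₂ : W} {a b : W}
    (h : (H ⊔ SimpleGraph.fromEdgeSet {s(t₁, t₂)}).Reachable a b) :
    H.Reachable a b ∨ (H.Reachable a t₁ ∧ H.Reachable t₂ b) ∨
      (H.Reachable a t₂ ∧ H.Reachable t₁ b) := by
  obtain ⟨p⟩ := h
  induction p with
  | nil => exact Or.inl (Reachable.refl _)
  | @cons u v w hadj p ih =>
    rcases hadj with ha | ha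
    · rcases ih with hr | ⟨hr1, hr2⟩ | ⟨hr1, hr2⟩
      · exact Or.inl (ha.reachable.trans hr)
      · exact Or.inr (Or.inl ⟨ha.reachable.trans hr1, hr2⟩)
      · exact Or.inr (Or.inr ⟨ha.reachable.trans hr1, hr2⟩)
    · rw [SimpleGraph.fromEdgeSet_adj] at ha
      have he : s(u, v) = s(t₁, t₂) := by simpa using ha.1
      rw [Sym2.eq_iff] at he
      rcases he with ⟨rfl, rfl⟩ | ⟨rfl, rfl⟩
      · rcases ih with hr | ⟨hr1, hr2⟩ | ⟨hr1, hr2⟩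
        · exact Or.inr (Or.inl ⟨Reachable.refl _, hr⟩)
        · exact Or.inl (hr1.symm.trans hr2)
        · exact Or.inl hr2
      · rcases ih with hr | ⟨hr1, hr2⟩ | ⟨hr1, hr2⟩
        · exact Or.inr (Or.inr ⟨Reachable.refl _, hr⟩)
        · exact Or.inl hr2
        · exact Or.inl (hr1.symm.trans hr2)

lemma walk_edges_in_left {H₁ H₂ : SimpleGraph W} {S₁ S₂ : Set W}
    (h₁ : ∀ a b, H₁.Adj a b → a ∈ S₁ ∧ b ∈ S₁)
    (h₂ : ∀ a b, H₂.Adj a b → a ∈ S₂ ∧ b ∈ S₂)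
    (hS : ∀ x, x ∈ S₁ → x ∈ S₂ → False) {a b : W}
    (p : (H₁ ⊔ H₂).Walk a b) :
    a ∈ S₁ → ∀ e ∈ p.edges, e ∈ H₁.edgeSet := by
  induction p with
  | nil => intro _; simp
  | @cons u v w hadj p ih =>
    intro ha e he
    rcases hadj with hadj' | hadj'
    · rw [SimpleGraph.Walk.edges_cons] at he
      rcases List.mem_cons.mp he with rfl | he'
      · exact hadj'
      · exact ih (h₁ _ _ hadj').2 e he'
    · exact ((hS u ha (h₂ _ _ hadj').1).elim)

lemma acyclic_sup {H₁ H₂ : SimpleGraph W} {S₁ S₂ : Set W}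
    (h₁ : ∀ a b, H₁.Adj a b → a ∈ S₁ ∧ b ∈ S₁)
    (h₂ : ∀ a b, H₂.Adj a b → a ∈ S₂ ∧ b ∈ S₂)
    (hS : ∀ x, x ∈ S₁ → x ∈ S₂ → False)
    (a₁ : H₁.IsAcyclic) (a₂ : H₂.IsAcyclic) : (H₁ ⊔ H₂).IsAcyclic := by
  intro v c hc
  cases c with
  | nil => exact SimpleGraph.Walk.IsCycle.not_of_nil hc
  | @cons _ u _ hadj p =>
    rcases hadj with ha | ha
    · have hv : v ∈ S₁ := (h₁ _ _ ha).1
      have hedges := walk_edges_in_left h₁ h₂ hS (SimpleGraph.Walk.cons (Or.inl ha) p) hv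
      exact a₁ _ (hc.transfer hedges)
    · have hv : v ∈ S₂ := (h₂ _ _ ha).1
      have hedges : ∀ e ∈ (SimpleGraph.Walk.cons (Or.inr ha : (H₁ ⊔ H₂).Adj v u) p).edges,
          e ∈ H₂.edgeSet := by
        have hle : H₁ ⊔ H₂ ≤ H₂ ⊔ H₁ := le_of_eq (sup_comm _ _)
        have hsub : ∀ e ∈ (SimpleGraph.Walk.cons (Or.inr ha : (H₁ ⊔ H₂).Adj v u) p).edges,
            e ∈ (H₂ ⊔ H₁).edgeSet := fun e he => by
          have h3 := (SimpleGraph.Walk.cons (Or.inr ha : (H₁ ⊔ H₂).Adj v u) p).edges_subset_edgeSet he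
          rw [SimpleGraph.edgeSet_sup] at h3 ⊢
          exact h3.symm
        have hq := walk_edges_in_left h₂ h₁ (fun x h2 h1' => hS x h1' h2)
          ((SimpleGraph.Walk.cons (Or.inr ha : (H₁ ⊔ H₂).Adj v u) p).transfer (H₂ ⊔ H₁) hsub) hv
        intro e he
        exact hq e (by rw [SimpleGraph.Walk.edges_transfer]; exact he)
      exact a₂ _ (hc.transfer hedges)

lemma reach_support {H : SimpleGraph W} {S : Set W}
    (hsupp : ∀ a b, H.Adj a b → a ∈ S ∧ b ∈ S) {a b : W} (h : H.Reachable a b) :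
    a = b ∨ (a ∈ S ∧ b ∈ S) := by
  obtain ⟨p⟩ := h
  induction p with
  | nil => exact Or.inl rfl
  | @cons u v w hadj p ih =>
    refine Or.inr ⟨(hsupp _ _ hadj).1, ?_⟩
    rcases ih with rfl | ⟨-, hb⟩
    · exact (hsupp _ _ hadj).2
    · exact hb

lemma deleteEdges_anti {H : SimpleGraph W} {s t : Set (Sym2 W)} (h : s ⊆ t) :
    H.deleteEdges t ≤ H.deleteEdges s := by
  intro a b hab
  rw [SimpleGraph.deleteEdges_adj] at hab ⊢
  exact ⟨hab.1, fun hm => hab.2 (h hm)⟩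

lemma acyclic_add_edge {H : SimpleGraph W} {t₁ t₂ : W} (hne : t₁ ≠ t₂)
    (hnr : ¬ H.Reachable t₁ t₂) (hA : H.IsAcyclic) :
    (H ⊔ SimpleGraph.fromEdgeSet {s(t₁, t₂)}).IsAcyclic := by
  have hnadj : ¬ H.Adj t₁ t₂ := fun h => hnr h.reachable
  have hbridge : (H ⊔ SimpleGraph.fromEdgeSet {s(t₁, t₂)}).IsBridge s(t₁, t₂) := by
    rw [SimpleGraph.isBridge_iff]
    · intro hr
      apply hnr
      refine hr.mono ?_
      intro a b hab
      rcases hab with ⟨(h | h), hn⟩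
      · exact h
      · exfalso
        rw [SimpleGraph.fromEdgeSet_adj] at h
        apply hn
        rw [SimpleGraph.fromEdgeSet_adj]
        exact ⟨h.1, h.2⟩
  intro v c hc
  by_cases he : s(t₁, t₂) ∈ c.edges
  · exact hbridge.notMem_edges_of_isCycle hc he
  · have hsub : ∀ e ∈ c.edges, e ∈ H.edgeSet := by
      intro e hee
      have h1 := c.edges_subset_edgeSet hee
      rw [SimpleGraph.edgeSet_sup] at h1
      rcases h1 with h1 | h1
      · exact h1
      · exfalso
        rw [SimpleGraph.edgeSet_fromEdgeSet] at h1
        have h2 : e = s(t₁, t₂) := h1.1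
        exact he (h2 ▸ hee)
    exact hA _ (hc.transfer hsub)


end TangleAux

namespace TangleAux2

open SimpleGraph

variable {W : Type*} {E : Type*}

lemma not_reach_delete_of_acyclic {G : SimpleGraph W} (hac : G.IsAcyclic) {a b : W}
    (h : G.Adj a b) : ¬(G.deleteEdges {s(a, b)}).Reachable a b := by
  have hb := isAcyclic_iff_forall_edge_isBridge.mp hac ((SimpleGraph.mem_edgeSet (G := G)).mpr h)
  exact isBridge_iff.mp hb

/-- Propagation of an orientation along a path. -/
lemma chain3 {G : SimpleGraph W} {sep : W → W → Set E}
    (hO5 : ∀ t u x y, G.Adj t u → G.Adj x y → s(t, u) ≠ s(x, y) →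
      (G.deleteEdges {s(t, u), s(x, y)}).Reachable u x → sep t u ⊆ sep x y)
    {x : E} {c w : W} (p : G.Walk c w) :
    ∀ {v : W} (hvc : G.Adj v c), x ∈ sep v c → (SimpleGraph.Walk.cons hvc p).IsPath →
    ∃ y, G.Adj y w ∧ x ∈ sep y w ∧ s(y, w) ∈ (SimpleGraph.Walk.cons hvc p).edges := by
  induction p with
  | nil => exact fun hvc hx _ => ⟨_, hvc, hx, by simp⟩
  | @cons c d w' hcd q ih =>
    intro v hvc hx hpath
    have hvd : v ≠ d := by
      intro hvd
      have h1 := (SimpleGraph.Walk.cons_isPath_iff _ _).mp hpath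
      apply h1.2
      rw [SimpleGraph.Walk.support_cons]
      exact List.mem_cons_of_mem _ (hvd ▸ q.start_mem_support)
    have hne : s(v, c) ≠ s(c, d) := by
      intro h; rw [Sym2.eq_iff] at h
      rcases h with ⟨rfl, rfl⟩ | ⟨h1, _⟩
      · exact G.loopless.irrefl _ hvc
      · exact hvd h1
    have hx2 : x ∈ sep c d :=
      hO5 v c c d hvc hcd hne (Reachable.refl c) hx
    obtain ⟨y, hy1, hy2, hy3⟩ := ih hcd hx2 hpath.of_cons
    exact ⟨y, hy1, hy2, by
      rw [SimpleGraph.Walk.edges_cons]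
      exact List.mem_cons_of_mem _ hy3⟩

lemma reachable_delete_dichotomy {G : SimpleGraph W} {t u : W} (hG : G.Preconnected)
    (v : W) :
    (G.deleteEdges {s(t, u)}).Reachable t v ∨ (G.deleteEdges {s(t, u)}).Reachable u v := by
  obtain ⟨p⟩ := hG t v
  suffices h : ∀ (a : W) (_ : G.Walk a v),
      ((G.deleteEdges {s(t, u)}).Reachable t a ∨ (G.deleteEdges {s(t, u)}).Reachable u a) →
      ((G.deleteEdges {s(t, u)}).Reachable t v ∨ (G.deleteEdges {s(t, u)}).Reachable u v) by
    exact h t p (Or.inl (Reachable.refl _))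
  clear p
  intro a q
  induction q with
  | nil => exact fun ha => ha
  | @cons a c w hadj q ih =>
    intro ha
    by_cases hcase : s(a, c) = s(t, u)
    · rw [Sym2.eq_iff] at hcase
      rcases hcase with ⟨rfl, rfl⟩ | ⟨rfl, rfl⟩
      · exact ih (Or.inr (Reachable.refl _))
      · exact ih (Or.inl (Reachable.refl _))
    · have hadj' : (G.deleteEdges {s(t, u)}).Adj a c := by
        rw [SimpleGraph.deleteEdges_adj]
        exact ⟨hadj, by simpa using hcase⟩
      rcases ha with ha | ha
      · exact ih (Or.inl (ha.trans hadj'.reachable))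
      · exact ih (Or.inr (ha.trans hadj'.reachable))

/-- The parts of the tree-decomposition induced by edge separations. -/
def partFun (G : SimpleGraph W) (sep : W → W → Set E) : W → Set E :=
  fun v => {x | ∀ w, G.Adj v w → x ∈ sep v w}

lemma exists_sink [Fintype W] [Nonempty W] {G : SimpleGraph W} (hac : G.IsAcyclic)
    {sep : W → W → Set E} (hsep : ∀ t u, G.Adj t u → sep u t = (sep t u)ᶜ) (x : E) :
    ∃ v, x ∈ partFun G sep v := by
  classical
  set F : W → ℕ := fun v => (Finset.univ.filter (fun pr : W × W => G.Adj pr.1 pr.2 ∧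
    x ∈ sep pr.1 pr.2 ∧ (G.deleteEdges {s(pr.1, pr.2)}).Reachable pr.1 v)).card with hF
  obtain ⟨v, -, hv⟩ := Finset.exists_max_image Finset.univ F ⟨Classical.arbitrary W, Finset.mem_univ _⟩
  refine ⟨v, ?_⟩
  by_contra hcon
  simp only [partFun, Set.mem_setOf_eq, not_forall] at hcon
  obtain ⟨u₀, hadj, hx⟩ := hcon
  have hxu : x ∈ sep u₀ v := by
    rw [hsep v u₀ hadj]; exact hx
  have hbridge := not_reach_delete_of_acyclic hac hadj.symm
  have hsub : Finset.univ.filter (fun pr : W × W => G.Adj pr.1 pr.2 ∧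
      x ∈ sep pr.1 pr.2 ∧ (G.deleteEdges {s(pr.1, pr.2)}).Reachable pr.1 v) ⊆
      Finset.univ.filter (fun pr : W × W => G.Adj pr.1 pr.2 ∧
      x ∈ sep pr.1 pr.2 ∧ (G.deleteEdges {s(pr.1, pr.2)}).Reachable pr.1 u₀) := by
    intro pr hpr
    rw [Finset.mem_filter] at hpr ⊢
    obtain ⟨-, hA, hX, hR⟩ := hpr
    refine ⟨Finset.mem_univ _, hA, hX, ?_⟩
    by_cases hpe : s(pr.1, pr.2) = s(u₀, v)
    · exfalso
      rw [Sym2.eq_iff] at hpe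
      rcases hpe with ⟨h1, h2⟩ | ⟨h1, h2⟩
      · subst h1; subst h2
        exact hbridge hR
      · subst h1; subst h2
        exact hx hX
    · have hadj' : (G.deleteEdges {s(pr.1, pr.2)}).Adj v u₀ := by
        rw [SimpleGraph.deleteEdges_adj]
        refine ⟨hadj, ?_⟩
        simp only [Set.mem_singleton_iff]
        intro hh
        exact hpe (hh.symm.trans Sym2.eq_swap)
      exact hR.trans hadj'.reachable
  have hmem : (u₀, v) ∈ Finset.univ.filter (fun pr : W × W => G.Adj pr.1 pr.2 ∧
      x ∈ sep pr.1 pr.2 ∧ (G.deleteEdges {s(pr.1, pr.2)}).Reachable pr.1 u₀) := by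
    rw [Finset.mem_filter]
    exact ⟨Finset.mem_univ _, hadj.symm, hxu, Reachable.refl _⟩
  have hnmem : (u₀, v) ∉ Finset.univ.filter (fun pr : W × W => G.Adj pr.1 pr.2 ∧
      x ∈ sep pr.1 pr.2 ∧ (G.deleteEdges {s(pr.1, pr.2)}).Reachable pr.1 v) := by
    rw [Finset.mem_filter]
    rintro ⟨-, -, -, hR⟩
    exact hbridge hR
  have hlt : F v < F u₀ :=
    Finset.card_lt_card (Finset.ssubset_iff_of_subset hsub |>.mpr ⟨_, hmem, hnmem⟩)
  exact absurd (hv u₀ (Finset.mem_univ _)) (not_le.mpr hlt)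

lemma sink_unique {G : SimpleGraph W} (hpre : G.Preconnected)
    {sep : W → W → Set E}
    (hsep : ∀ t u, G.Adj t u → sep u t = (sep t u)ᶜ)
    (hO5 : ∀ t u x y, G.Adj t u → G.Adj x y → s(t, u) ≠ s(x, y) →
      (G.deleteEdges {s(t, u), s(x, y)}).Reachable u x → sep t u ⊆ sep x y)
    {x : E} {t t' : W} (ht : x ∈ partFun G sep t) (ht' : x ∈ partFun G sep t') :
    t = t' := by
  classical
  by_contra hne
  obtain ⟨p0⟩ := hpre t t'
  have hp := p0.toPath
  obtain ⟨p, hpath⟩ := hp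
  cases p with
  | nil => exact hne rfl
  | @cons _ c _ htc q =>
    have hx1 : x ∈ sep t c := ht c htc
    obtain ⟨y, hy1, hy2, -⟩ := chain3 hO5 q htc hx1 hpath
    have hx3 : x ∈ sep t' y := ht' y hy1.symm
    rw [hsep t' y hy1.symm] at hy2
    exact hy2 hx3

lemma isPartitionFam_partFun [Fintype W] [Nonempty W] {G : SimpleGraph W}
    (hpre : G.Preconnected) (hac : G.IsAcyclic)
    {sep : W → W → Set E}
    (hsep : ∀ t u, G.Adj t u → sep u t = (sep t u)ᶜ)
    (hO5 : ∀ t u x y, G.Adj t u → G.Adj x y → s(t, u) ≠ s(x, y) →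
      (G.deleteEdges {s(t, u), s(x, y)}).Reachable u x → sep t u ⊆ sep x y) :
    (∀ a b : W, a ≠ b → Disjoint (partFun G sep a) (partFun G sep b)) ∧
      (⋃ v, partFun G sep v) = Set.univ := by
  constructor
  · intro a b hab
    rw [Set.disjoint_left]
    intro x hxa hxb
    exact hab (sink_unique hpre hsep hO5 hxa hxb)
  · rw [Set.eq_univ_iff_forall]
    intro x
    obtain ⟨v, hv⟩ := exists_sink hac hsep x
    exact Set.mem_iUnion.mpr ⟨v, hv⟩

lemma treeSide_aux [Fintype W] [Nonempty W] {G : SimpleGraph W}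
    (hpre : G.Preconnected) (hac : G.IsAcyclic)
    {sep : W → W → Set E}
    (hsep : ∀ t u, G.Adj t u → sep u t = (sep t u)ᶜ)
    (hO5 : ∀ t u x y, G.Adj t u → G.Adj x y → s(t, u) ≠ s(x, y) →
      (G.deleteEdges {s(t, u), s(x, y)}).Reachable u x → sep t u ⊆ sep x y)
    {t u : W} (h : G.Adj t u) :
    (⋃ v ∈ {v | (G.deleteEdges {s(t, u)}).Reachable t v}, partFun G sep v) = sep t u := by
  classical
  ext x
  simp only [Set.mem_iUnion, Set.mem_setOf_eq, exists_prop]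
  constructor
  · rintro ⟨v, hreach, hxv⟩
    -- walk from v to t inside G - e, as a path, transferred to G
    obtain ⟨p0⟩ := hreach.symm
    obtain ⟨p, hpath⟩ := p0.toPath
    have hedges : ∀ e ∈ p.edges, e ∈ G.edgeSet := by
      intro e he
      exact SimpleGraph.edgeSet_mono (SimpleGraph.deleteEdges_le _) (p.edges_subset_edgeSet he)
    have hedges' : ∀ e ∈ p.edges, e ≠ s(t, u) := by
      intro e he
      have h1 := p.edges_subset_edgeSet he
      rw [SimpleGraph.edgeSet_deleteEdges] at h1
      simpa using h1.2
    by_cases hvt : v = t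
    · subst hvt; exact hxv u h
    · obtain ⟨c, hvc, q, hq⟩ := SimpleGraph.Walk.exists_eq_cons_of_ne hvt (p.transfer G hedges)
      have hpq : (SimpleGraph.Walk.cons hvc q).IsPath := hq ▸ (hpath.transfer hedges)
      have hx1 : x ∈ sep v c := hxv c hvc
      obtain ⟨y, hy1, hy2, hy3⟩ := chain3 hO5 q hvc hx1 hpq
      have hyne : s(y, t) ≠ s(t, u) := by
        apply hedges'
        rw [← SimpleGraph.Walk.edges_transfer p hedges, hq]
        exact hy3
      exact hO5 y t t u hy1 h hyne (Reachable.refl t) hy2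
  · intro hx
    obtain ⟨v, hv⟩ := exists_sink hac hsep x
    refine ⟨v, ?_, hv⟩
    rcases reachable_delete_dichotomy (t := t) (u := u) hpre v with hr | hr
    · exact hr
    · exfalso
      by_cases hvu : v = u
      · subst hvu
        have := hv t h.symm
        rw [hsep t v h] at this
        exact this hx
      · obtain ⟨p0⟩ := hr.symm
        obtain ⟨p, hpath⟩ := p0.toPath
        have hedges : ∀ e ∈ p.edges, e ∈ G.edgeSet := by
          intro e he
          exact SimpleGraph.edgeSet_mono (SimpleGraph.deleteEdges_le _) (p.edges_subset_edgeSet he)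
        have hedges' : ∀ e ∈ p.edges, e ≠ s(t, u) := by
          intro e he
          have h1 := p.edges_subset_edgeSet he
          rw [SimpleGraph.edgeSet_deleteEdges] at h1
          simpa using h1.2
        obtain ⟨c, hvc, q, hq⟩ := SimpleGraph.Walk.exists_eq_cons_of_ne hvu (p.transfer G hedges)
        have hpq : (SimpleGraph.Walk.cons hvc q).IsPath := hq ▸ (hpath.transfer hedges)
        have hx1 : x ∈ sep v c := hv c hvc
        obtain ⟨y, hy1, hy2, hy3⟩ := chain3 hO5 q hvc hx1 hpq
        have hyne : s(y, u) ≠ s(u, t) := by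
          have h2 : s(y, u) ≠ s(t, u) := by
            apply hedges'
            rw [← SimpleGraph.Walk.edges_transfer p hedges, hq]
            exact hy3
          intro hcontra
          exact h2 (hcontra.trans Sym2.eq_swap)
        have hfin := hO5 y u u t hy1 h.symm hyne (Reachable.refl u) hy2
        rw [hsep t u h] at hfin
        exact hfin hx

end TangleAux2

namespace TangleAux3

/-- A tangle never contains both sides of a separation. -/
lemma tangle_not_both {f : Set E → ℤ} {k : ℤ} {T : Set (Set E)} (hT : IsTangle f k T)
    {A : Set E} (hA : A ∈ T) : Aᶜ ∉ T := by
  intro h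
  apply hT.2.2.1 A hA Aᶜ h A hA
  ext x; by_cases hx : x ∈ A <;> simp [hx]

/-- Subsets of small sides are small. -/
lemma tangle_subset {f : Set E → ℤ} {k : ℤ} {T : Set (Set E)} (hT : IsTangle f k T)
    {A B : Set E} (hA : A ∈ T) (hBA : B ⊆ A) (hfB : f B ≤ k) : B ∈ T := by
  rcases hT.2.1 B hfB with h | h
  · exact h
  · exfalso
    apply hT.2.2.1 Bᶜ h A hA A hA
    rw [Set.eq_univ_iff_forall]
    intro x
    by_cases hx : x ∈ B
    · exact Or.inr (hBA hx)
    · exact Or.inl (Or.inl hx)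

lemma fcompl {f : Set E → ℤ} (hsym : FSymm f) (A : Set E) : f Aᶜ = f A := (hsym A).symm

/-- Any two distinct maximal tangles are distinguishable. -/
lemma exists_distinguishes {f : Set E → ℤ} {T T' : Set (Set E)}
    (hT : IsMaximalTangle f T) (hT' : IsMaximalTangle f T') (hne : T ≠ T') :
    ∃ C, Distinguishes C T T' := by
  by_contra hcon
  push_neg at hcon
  obtain ⟨k, hk⟩ := hT.1
  obtain ⟨k', hk'⟩ := hT'.1
  rcases le_total k k' with hkk | hkk
  · have hsub : T ⊆ T' := by
      intro A hA
      rcases hk'.2.1 A (le_trans (hk.1 A hA) hkk) with h1 | h1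
      · exact h1
      · exact absurd (Or.inl ⟨hA, h1⟩) (hcon A)
    exact hne ((hT.2 T' ⟨k', hk'⟩ hsub)).symm
  · have hsub : T' ⊆ T := by
      intro A hA
      rcases hk.2.1 A (le_trans (hk'.1 A hA) hkk) with h1 | h1
      · exact h1
      · exact absurd (Or.inr ⟨h1, hA⟩) (hcon A)
    exact hne (hT'.2 T ⟨k, hk⟩ hsub)

/-- Existence of oriented efficient distinguishers. -/
lemma exists_eff [Fintype E] {f : Set E → ℤ} (hsym : FSymm f) {T T' : Set (Set E)}
    (hT : IsMaximalTangle f T) (hT' : IsMaximalTangle f T') (hne : T ≠ T') :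
    ∃ C, C ∈ T ∧ Cᶜ ∈ T' ∧ ∀ D, Distinguishes D T T' → f C ≤ f D := by
  classical
  have hDne : {C : Set E | Distinguishes C T T'}.Nonempty := exists_distinguishes hT hT' hne
  obtain ⟨C₀, hC₀, hmin⟩ := Set.exists_min_image {C : Set E | Distinguishes C T T'} f
    (Set.toFinite _) hDne
  rcases hC₀ with ⟨h1, h2⟩ | ⟨h1, h2⟩
  · exact ⟨C₀, h1, h2, fun D hD => hmin D hD⟩
  · refine ⟨C₀ᶜ, h1, by rwa [compl_compl], fun D hD => ?_⟩
    rw [fcompl hsym]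
    exact hmin D hD

/-- Existence of a maximal tangle. -/
lemma exists_maximal_tangle [Fintype E] (f : Set E → ℤ) : ∃ T, IsMaximalTangle f T := by
  classical
  obtain ⟨X₀, -, hX₀⟩ := Set.exists_min_image (Set.univ : Set (Set E)) f (Set.toFinite _)
    ⟨∅, Set.mem_univ _⟩
  have hemp : IsTangle f (f X₀ - 1) (∅ : Set (Set E)) := by
    refine ⟨by simp, ?_, by simp, by simp⟩
    intro A hA
    exfalso
    have := hX₀ A trivial
    omega
  obtain ⟨T, hT𝒯, hmax⟩ := Set.Finite.exists_maximalFor id {T : Set (Set E) | ∃ k, IsTangle f k T}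
    (Set.toFinite _) ⟨∅, ⟨_, hemp⟩⟩
  exact ⟨T, hT𝒯, fun T' hT' hsub => le_antisymm (hmax hT' hsub) hsub⟩

/-- The key uncrossing inequality: one of the two corners of `C` and `B` is
still of minimal order. -/
lemma corner_key [Fintype E] {f : Set E → ℤ} (hsym : FSymm f) (hsub : FSubmod f)
    {PB QB : Set (Set E)} {kB lB : ℤ}
    (hPB : IsTangle f kB PB) (hQB : IsTangle f lB QB)
    {C B : Set E}
    (hBPB : B ∈ PB) (hBQB : Bᶜ ∈ QB) (hBeff : ∀ D, Distinguishes D PB QB → f B ≤ f D)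
    (hBC : f B ≤ f C) :
    f (C ∪ B) ≤ f C ∨ f (C ∩ Bᶜ) ≤ f C := by
  by_contra hcon
  push_neg at hcon
  obtain ⟨h1, h2⟩ := hcon
  have hs1 := hsub C B
  have hs2 := hsub C Bᶜ
  have hfB : f Bᶜ = f B := fcompl hsym B
  have hD1 : f (C ∩ B) < f B := by omega
  have hD2' : f (C ∪ Bᶜ) < f B := by omega
  have hD2 : f (Cᶜ ∩ B) < f B := by
    have : (Cᶜ ∩ B)ᶜ = C ∪ Bᶜ := by rw [Set.compl_inter, compl_compl]
    rw [← fcompl hsym (Cᶜ ∩ B), this]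
    exact hD2'
  have hkB : f B ≤ kB := hPB.1 B hBPB
  have hlB : f B ≤ lB := by
    have := hQB.1 Bᶜ hBQB
    omega
  -- QB orients both C ∩ B and Cᶜ ∩ B, but cannot contain both
  have hnotboth : ¬(C ∩ B ∈ QB ∧ Cᶜ ∩ B ∈ QB) := by
    rintro ⟨ha, hb⟩
    apply hQB.2.2.1 Bᶜ hBQB (C ∩ B) ha (Cᶜ ∩ B) hb
    rw [Set.eq_univ_iff_forall]
    intro x
    by_cases hx : x ∈ B
    · by_cases hxc : x ∈ C
      · exact Or.inl (Or.inr ⟨hxc, hx⟩)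
      · exact Or.inr ⟨hxc, hx⟩
    · exact Or.inl (Or.inl hx)
  rcases hQB.2.1 (C ∩ B) (by omega) with hq1 | hq1
  · rcases hQB.2.1 (Cᶜ ∩ B) (by omega) with hq2 | hq2
    · exact hnotboth ⟨hq1, hq2⟩
    · -- Cᶜ ∩ B distinguishes PB, QB with order < f B
      have hp : Cᶜ ∩ B ∈ PB :=
        tangle_subset hPB hBPB Set.inter_subset_right (by omega)
      have := hBeff (Cᶜ ∩ B) (Or.inl ⟨hp, hq2⟩)
      omega
  · have hp : C ∩ B ∈ PB :=
      tangle_subset hPB hBPB Set.inter_subset_right (by omega)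
    have := hBeff (C ∩ B) (Or.inl ⟨hp, hq1⟩)
    omega

/-- Full corner lemma: uncross an efficient distinguisher with a boundary piece. -/
lemma corner_lemma [Fintype E] {f : Set E → ℤ} (hsym : FSymm f) (hsub : FSubmod f)
    {P₀ Q₀ PB QB : Set (Set E)} {k₀ l₀ kB lB : ℤ}
    (hP₀ : IsTangle f k₀ P₀) (hQ₀ : IsTangle f l₀ Q₀)
    (hPB : IsTangle f kB PB) (hQB : IsTangle f lB QB)
    {C B : Set E}
    (hCP : C ∈ P₀) (hCQ : Cᶜ ∈ Q₀) (hCeff : ∀ D, Distinguishes D P₀ Q₀ → f C ≤ f D)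
    (hBP : B ∈ P₀) (hBQ : B ∈ Q₀)
    (hBPB : B ∈ PB) (hBQB : Bᶜ ∈ QB) (hBeff : ∀ D, Distinguishes D PB QB → f B ≤ f D)
    (hBC : f B ≤ f C) :
    ∃ C', C' ∈ P₀ ∧ C'ᶜ ∈ Q₀ ∧ (∀ D, Distinguishes D P₀ Q₀ → f C' ≤ f D) ∧
      (B ⊆ C' ∨ B ⊆ C'ᶜ) ∧
      (∀ B' : Set E, Disjoint B' B → (B' ⊆ C ∨ B' ⊆ Cᶜ) → (B' ⊆ C' ∨ B' ⊆ C'ᶜ)) := by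
  have hk₀ : f C ≤ k₀ := hP₀.1 C hCP
  have hl₀ : f C ≤ l₀ := by
    have := hQ₀.1 Cᶜ hCQ
    have := fcompl hsym C
    omega
  rcases corner_key hsym hsub hPB hQB hBPB hBQB hBeff hBC with hu | hi
  · -- C' = C ∪ B
    have hmem : C ∪ B ∈ P₀ := by
      rcases hP₀.2.1 (C ∪ B) (by omega) with h | h
      · exact h
      · exfalso
        apply hP₀.2.2.1 C hCP B hBP (C ∪ B)ᶜ h
        rw [Set.eq_univ_iff_forall]
        intro x
        by_cases hx : x ∈ C ∪ B
        · rcases hx with hx | hx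
          · exact Or.inl (Or.inl hx)
          · exact Or.inl (Or.inr hx)
        · exact Or.inr hx
    have hmemc : (C ∪ B)ᶜ ∈ Q₀ := by
      apply tangle_subset hQ₀ hCQ
      · rw [Set.compl_union]
        exact Set.inter_subset_left
      · rw [fcompl hsym]
        omega
    refine ⟨C ∪ B, hmem, hmemc, fun D hD => le_trans hu (hCeff D hD),
      Or.inl Set.subset_union_right, ?_⟩
    intro B' hd hn
    rcases hn with hn | hn
    · exact Or.inl (hn.trans Set.subset_union_left)
    · refine Or.inr ?_
      rw [Set.compl_union]
      have hBc : B' ⊆ Bᶜ := fun x hx hxB => Set.disjoint_left.mp hd hx hxB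
      exact Set.subset_inter hn hBc
  · -- C' = C ∩ Bᶜ
    have hmem : C ∩ Bᶜ ∈ P₀ :=
      tangle_subset hP₀ hCP Set.inter_subset_left (by omega)
    have hmemc : (C ∩ Bᶜ)ᶜ ∈ Q₀ := by
      have hfc : f (C ∩ Bᶜ)ᶜ ≤ l₀ := by
        rw [fcompl hsym]
        omega
      rcases hQ₀.2.1 ((C ∩ Bᶜ)ᶜ) hfc with h | h
      · exact h
      · exfalso
        rw [compl_compl] at h
        apply hQ₀.2.2.1 Cᶜ hCQ B hBQ (C ∩ Bᶜ) h
        rw [Set.eq_univ_iff_forall]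
        intro x
        by_cases hx : x ∈ C
        · by_cases hxb : x ∈ B
          · exact Or.inl (Or.inr hxb)
          · exact Or.inr ⟨hx, hxb⟩
        · exact Or.inl (Or.inl hx)
    refine ⟨C ∩ Bᶜ, hmem, hmemc, fun D hD => le_trans hi (hCeff D hD), ?_, ?_⟩
    · refine Or.inr ?_
      rw [Set.compl_inter, compl_compl]
      exact Set.subset_union_right
    · intro B' hd hn
      rcases hn with hn | hn
      · have hBc : B' ⊆ Bᶜ := fun x hx hxB => Set.disjoint_left.mp hd hx hxB
        exact Or.inl (Set.subset_inter hn hBc)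
      · refine Or.inr ?_
        rw [Set.compl_inter, compl_compl]
        exact hn.trans Set.subset_union_left

/-- Absorbing all boundary pieces into an efficient distinguisher. -/
lemma absorb [Fintype E] {f : Set E → ℤ} (hsym : FSymm f) (hsub : FSubmod f)
    {P₀ Q₀ : Set (Set E)} {k₀ l₀ : ℤ}
    (hP₀ : IsTangle f k₀ P₀) (hQ₀ : IsTangle f l₀ Q₀)
    (ℬ : Finset (Set E)) :
    (∀ B ∈ ℬ, (B ∈ P₀ ∧ B ∈ Q₀) ∧ (∀ D, Distinguishes D P₀ Q₀ → f B ≤ f D) ∧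
      ∃ PB QB kB lB, IsTangle f kB PB ∧ IsTangle f lB QB ∧ B ∈ PB ∧ Bᶜ ∈ QB ∧
        ∀ D, Distinguishes D PB QB → f B ≤ f D) →
    (∀ B ∈ ℬ, ∀ B' ∈ ℬ, B ≠ B' → Disjoint B B') →
    ∀ C : Set E, C ∈ P₀ → Cᶜ ∈ Q₀ → (∀ D, Distinguishes D P₀ Q₀ → f C ≤ f D) →
    ∃ A, A ∈ P₀ ∧ Aᶜ ∈ Q₀ ∧ (∀ D, Distinguishes D P₀ Q₀ → f A ≤ f D) ∧
      (∀ B ∈ ℬ, B ⊆ A ∨ B ⊆ Aᶜ) ∧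
      (∀ B', (∀ B ∈ ℬ, Disjoint B' B) → (B' ⊆ C ∨ B' ⊆ Cᶜ) → (B' ⊆ A ∨ B' ⊆ Aᶜ)) := by
  classical
  induction ℬ using Finset.induction_on with
  | empty =>
    intro _ _ C hC1 hC2 hC3
    exact ⟨C, hC1, hC2, hC3, by simp, fun B' _ h => h⟩
  | @insert B₀ sB hB₀s ih =>
    intro hB hdisj C hC1 hC2 hC3
    obtain ⟨⟨hB₀P, hB₀Q⟩, hB₀bound, PB, QB, kB, lB, hPB, hQB, hBPB, hBQB, hBeff⟩ :=
      hB B₀ (Finset.mem_insert_self _ _)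
    obtain ⟨C₁, h1, h2, h3, hnest₀, hpres₀⟩ :=
      corner_lemma hsym hsub hP₀ hQ₀ hPB hQB hC1 hC2 hC3 hB₀P hB₀Q hBPB hBQB hBeff
        (hB₀bound C (Or.inl ⟨hC1, hC2⟩))
    obtain ⟨A, hA1, hA2, hA3, hAnest, hApres⟩ :=
      ih (fun B hBs => hB B (Finset.mem_insert_of_mem hBs))
        (fun B hBs B' hB's hne =>
          hdisj B (Finset.mem_insert_of_mem hBs) B' (Finset.mem_insert_of_mem hB's) hne)
        C₁ h1 h2 h3
    refine ⟨A, hA1, hA2, hA3, ?_, ?_⟩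
    · intro B hBmem
      rcases Finset.mem_insert.mp hBmem with rfl | hBs
      · refine hApres B (fun B' hB's => ?_) hnest₀
        exact hdisj B (Finset.mem_insert_self _ _) B' (Finset.mem_insert_of_mem hB's)
          (fun hEq => hB₀s (hEq ▸ hB's))
      · exact hAnest B hBs
    · intro B' hd hn
      exact hApres B' (fun B hBs => hd B (Finset.mem_insert_of_mem hBs))
        (hpres₀ B' (hd B₀ (Finset.mem_insert_self _ _)) hn)


end TangleAux3


namespace TangleRec

open TangleAux TangleAux2 TangleAux3 SimpleGraph

lemma rec_main {E : Type*} [Fintype E] {f : Set E → ℤ} (hsym : FSymm f) (hsub : FSubmod f)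
    {n : ℕ} (τ : Fin n → Set (Set E)) (hτ : ∀ i, IsMaximalTangle f (τ i))
    (hτinj : Function.Injective τ) (S : Finset (Fin n)) :
    ∀ ℬ : Finset (Set E), S.Nonempty →
    (∀ B ∈ ℬ, (∀ i ∈ S, B ∈ τ i) ∧
      (∀ p ∈ S, ∀ q ∈ S, p ≠ q → ∀ D, Distinguishes D (τ p) (τ q) → f B ≤ f D) ∧
      (∃ PB QB kB lB, IsTangle f kB PB ∧ IsTangle f lB QB ∧ B ∈ PB ∧ Bᶜ ∈ QB ∧
        ∀ D, Distinguishes D PB QB → f B ≤ f D)) →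
    (∀ B ∈ ℬ, ∀ B' ∈ ℬ, B ≠ B' → Disjoint B B') →
    ∃ (G : SimpleGraph (Fin n)) (sep : Fin n → Fin n → Set E) (α : Set E → Fin n),
      (∀ t u, G.Adj t u → t ∈ S ∧ u ∈ S) ∧
      (∀ t ∈ S, ∀ u ∈ S, G.Reachable t u) ∧
      G.IsAcyclic ∧
      (∀ t u, G.Adj t u → sep u t = (sep t u)ᶜ) ∧
      (∀ t u x y, G.Adj t u → G.Adj x y → s(t, u) ≠ s(x, y) →
        (G.deleteEdges {s(t, u), s(x, y)}).Reachable u x → sep t u ⊆ sep x y) ∧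
      (∀ B ∈ ℬ, α B ∈ S ∧ ∀ t u, G.Adj t u →
        (G.deleteEdges {s(t, u)}).Reachable u (α B) → sep t u ⊆ Bᶜ) ∧
      (∀ t u, G.Adj t u → sep u t ∈ τ t) ∧
      (∀ p ∈ S, ∀ q ∈ S, p ≠ q → ∃ t u, G.Adj t u ∧
        DistinguishesEff f (sep t u) (τ p) (τ q)) := by
  classical
  induction S using Finset.strongInduction with
  | _ S ih =>
  intro ℬ hSne hB hdisj
  by_cases hsing : S.card ≤ 1
  · -- base case : a single node, no edges
    have hcard : S.card = 1 := le_antisymm hsing (Finset.card_pos.mpr hSne)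
    obtain ⟨t₀, ht₀⟩ := Finset.card_eq_one.mp hcard
    subst ht₀
    refine ⟨⊥, fun _ _ => ∅, fun _ => t₀, ?_, ?_, ?_, ?_, ?_, ?_, ?_, ?_⟩
    · intro t u hadj; simp at hadj
    · intro t ht u hu
      rw [Finset.mem_singleton] at ht hu
      subst ht; subst hu
      exact Reachable.refl _
    · exact SimpleGraph.isAcyclic_bot
    · intro t u hadj; simp at hadj
    · intro t u x y hadj; simp at hadj
    · intro B hBmem
      exact ⟨Finset.mem_singleton_self t₀, fun t u hadj => by simp at hadj⟩
    · intro t u hadj; simp at hadj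
    · intro p hp q hq hne
      rw [Finset.mem_singleton] at hp hq
      exact absurd (hp.trans hq.symm) hne
  · -- main case
    push_neg at hsing
    obtain ⟨p', hp', q', hq', hpq'⟩ := Finset.one_lt_card.mp hsing
    -- a minimal-order efficient distinguisher over all pairs in S
    have hDDne : {C : Set E | ∃ p ∈ S, ∃ q ∈ S, p ≠ q ∧ C ∈ τ p ∧ Cᶜ ∈ τ q ∧
        ∀ D, Distinguishes D (τ p) (τ q) → f C ≤ f D}.Nonempty := by
      obtain ⟨C', h1, h2, h3⟩ := exists_eff hsym (hτ p') (hτ q') (fun h => hpq' (hτinj h))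
      exact ⟨C', p', hp', q', hq', hpq', h1, h2, h3⟩
    obtain ⟨C₀, hC₀mem, hC₀min⟩ := Set.exists_min_image _ f (Set.toFinite _) hDDne
    obtain ⟨p₀, hp₀, q₀, hq₀, hpq₀, hCp, hCq, hCeff⟩ := hC₀mem
    have hMIN : ∀ p ∈ S, ∀ q ∈ S, p ≠ q → ∀ D, Distinguishes D (τ p) (τ q) → f C₀ ≤ f D := by
      intro p hp q hq hne D hD
      obtain ⟨C', h1, h2, h3⟩ := exists_eff hsym (hτ p) (hτ q) (fun h => hne (hτinj h))
      exact le_trans (hC₀min C' ⟨p, hp, q, hq, hne, h1, h2, h3⟩) (h3 D hD)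
    obtain ⟨k₀, hk₀⟩ := (hτ p₀).1
    obtain ⟨l₀, hl₀⟩ := (hτ q₀).1
    obtain ⟨A, hA1, hA2, hA3, hAnest, -⟩ :=
      absorb hsym hsub hk₀ hl₀ ℬ
        (fun B hBm => ⟨⟨(hB B hBm).1 p₀ hp₀, (hB B hBm).1 q₀ hq₀⟩,
          fun D hD => (hB B hBm).2.1 p₀ hp₀ q₀ hq₀ hpq₀ D hD, (hB B hBm).2.2⟩)
        hdisj C₀ hCp hCq hCeff
    have hAmin : ∀ p ∈ S, ∀ q ∈ S, p ≠ q → ∀ D, Distinguishes D (τ p) (τ q) → f A ≤ f D := by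
      intro p hp q hq hne D hD
      exact le_trans (hA3 C₀ (Or.inl ⟨hCp, hCq⟩)) (hMIN p hp q hq hne D hD)
    have horient : ∀ t ∈ S, A ∈ τ t ∨ Aᶜ ∈ τ t := by
      intro t ht
      obtain ⟨t', ht', hne'⟩ := Finset.exists_mem_ne hsing t
      obtain ⟨kt, hkt⟩ := (hτ t).1
      obtain ⟨C', h1, h2, -⟩ := exists_eff hsym (hτ t) (hτ t') (fun h => hne' (hτinj h).symm)
      have hfAkt : f A ≤ kt :=
        le_trans (hAmin t ht t' ht' (fun hh => hne' hh.symm) C' (Or.inl ⟨h1, h2⟩))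
          (hkt.1 C' h1)
      exact hkt.2.1 A hfAkt
    set S₁ := S.filter (fun t => A ∈ τ t) with hS₁def
    set S₂ := S.filter (fun t => A ∉ τ t) with hS₂def
    have hS₁sub : S₁ ⊆ S := Finset.filter_subset _ _
    have hS₂sub : S₂ ⊆ S := Finset.filter_subset _ _
    have hS₁mem : ∀ t ∈ S₁, A ∈ τ t := fun t ht => (Finset.mem_filter.mp ht).2
    have hS₂mem : ∀ t ∈ S₂, Aᶜ ∈ τ t := by
      intro t ht
      have h1 := Finset.mem_filter.mp ht
      rcases horient t h1.1 with h | h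
      · exact absurd h h1.2
      · exact h
    have hSdisj : ∀ x, x ∈ S₁ → x ∈ S₂ → False := fun x h1 h2 =>
      (Finset.mem_filter.mp h2).2 (Finset.mem_filter.mp h1).2
    have hS12 : ∀ t ∈ S, t ∈ S₁ ∨ t ∈ S₂ := by
      intro t ht
      by_cases h : A ∈ τ t
      · exact Or.inl (Finset.mem_filter.mpr ⟨ht, h⟩)
      · exact Or.inr (Finset.mem_filter.mpr ⟨ht, h⟩)
    have hq₀A : A ∉ τ q₀ := fun h => tangle_not_both hl₀ h hA2
    have hp₀S₁ : p₀ ∈ S₁ := Finset.mem_filter.mpr ⟨hp₀, hA1⟩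
    have hq₀S₂ : q₀ ∈ S₂ := Finset.mem_filter.mpr ⟨hq₀, hq₀A⟩
    have hS₁ssub : S₁ ⊂ S := (Finset.ssubset_iff_of_subset hS₁sub).mpr
      ⟨q₀, hq₀, fun h => hSdisj q₀ h hq₀S₂⟩
    have hS₂ssub : S₂ ⊂ S := (Finset.ssubset_iff_of_subset hS₂sub).mpr
      ⟨p₀, hp₀, fun h => hSdisj p₀ hp₀S₁ h⟩
    -- recursive call on S₁
    have hB₁ : ∀ B ∈ insert A (ℬ.filter (fun B => B ⊆ Aᶜ)),
        (∀ i ∈ S₁, B ∈ τ i) ∧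
        (∀ p ∈ S₁, ∀ q ∈ S₁, p ≠ q → ∀ D, Distinguishes D (τ p) (τ q) → f B ≤ f D) ∧
        (∃ PB QB kB lB, IsTangle f kB PB ∧ IsTangle f lB QB ∧ B ∈ PB ∧ Bᶜ ∈ QB ∧
          ∀ D, Distinguishes D PB QB → f B ≤ f D) := by
      intro B hBm
      rcases Finset.mem_insert.mp hBm with rfl | hBm'
      · exact ⟨fun i hi => hS₁mem i hi,
          fun p hp q hq hne D hD => hAmin p (hS₁sub hp) q (hS₁sub hq) hne D hD,
          τ p₀, τ q₀, k₀, l₀, hk₀, hl₀, hA1, hA2, hA3⟩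
      · have hBm2 := Finset.mem_filter.mp hBm'
        exact ⟨fun i hi => (hB B hBm2.1).1 i (hS₁sub hi),
          fun p hp q hq hne => (hB B hBm2.1).2.1 p (hS₁sub hp) q (hS₁sub hq) hne,
          (hB B hBm2.1).2.2⟩
    have hdisj₁ : ∀ B ∈ insert A (ℬ.filter (fun B => B ⊆ Aᶜ)),
        ∀ B' ∈ insert A (ℬ.filter (fun B => B ⊆ Aᶜ)), B ≠ B' → Disjoint B B' := by
      intro B hBm B' hB'm hne
      rcases Finset.mem_insert.mp hBm with rfl | hBm' <;>
        rcases Finset.mem_insert.mp hB'm with h' | hB'm'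
      · exact absurd h'.symm hne
      · have hp := (Finset.mem_filter.mp hB'm').2
        exact Set.disjoint_left.mpr (fun x hxA hxB' => (hp hxB') hxA)
      · subst h'
        have hp := (Finset.mem_filter.mp hBm').2
        exact Set.disjoint_right.mpr (fun x hxA hxB => (hp hxB) hxA)
      · exact hdisj B (Finset.mem_filter.mp hBm').1 B' (Finset.mem_filter.mp hB'm').1 hne
    obtain ⟨G₁, sep₁, α₁, hO1₁, hO2₁, hO3₁, hO4₁, hO5₁, hO6₁, hO7₁, hO8₁⟩ :=
      ih S₁ hS₁ssub (insert A (ℬ.filter (fun B => B ⊆ Aᶜ))) ⟨p₀, hp₀S₁⟩ hB₁ hdisj₁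
    -- recursive call on S₂
    have hBsubA : ∀ B ∈ ℬ, ¬ B ⊆ Aᶜ → B ⊆ A := fun B hBm hns => (hAnest B hBm).resolve_right hns
    have hB₂ : ∀ B ∈ insert Aᶜ (ℬ.filter (fun B => ¬ B ⊆ Aᶜ)),
        (∀ i ∈ S₂, B ∈ τ i) ∧
        (∀ p ∈ S₂, ∀ q ∈ S₂, p ≠ q → ∀ D, Distinguishes D (τ p) (τ q) → f B ≤ f D) ∧
        (∃ PB QB kB lB, IsTangle f kB PB ∧ IsTangle f lB QB ∧ B ∈ PB ∧ Bᶜ ∈ QB ∧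
          ∀ D, Distinguishes D PB QB → f B ≤ f D) := by
      intro B hBm
      rcases Finset.mem_insert.mp hBm with rfl | hBm'
      · refine ⟨fun i hi => hS₂mem i hi,
          fun p hp q hq hne D hD => ?_,
          τ q₀, τ p₀, l₀, k₀, hl₀, hk₀, hA2, by rw [compl_compl]; exact hA1, ?_⟩
        · rw [fcompl hsym]
          exact hAmin p (hS₂sub hp) q (hS₂sub hq) hne D hD
        · intro D hD
          rw [fcompl hsym]
          refine hA3 D ?_
          rcases hD with ⟨hd1, hd2⟩ | ⟨hd1, hd2⟩
          · exact Or.inr ⟨hd2, hd1⟩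
          · exact Or.inl ⟨hd2, hd1⟩
      · have hBm2 := Finset.mem_filter.mp hBm'
        exact ⟨fun i hi => (hB B hBm2.1).1 i (hS₂sub hi),
          fun p hp q hq hne => (hB B hBm2.1).2.1 p (hS₂sub hp) q (hS₂sub hq) hne,
          (hB B hBm2.1).2.2⟩
    have hdisj₂ : ∀ B ∈ insert Aᶜ (ℬ.filter (fun B => ¬ B ⊆ Aᶜ)),
        ∀ B' ∈ insert Aᶜ (ℬ.filter (fun B => ¬ B ⊆ Aᶜ)), B ≠ B' → Disjoint B B' := by
      intro B hBm B' hB'm hne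
      rcases Finset.mem_insert.mp hBm with rfl | hBm' <;>
        rcases Finset.mem_insert.mp hB'm with h' | hB'm'
      · exact absurd h'.symm hne
      · have hp := hBsubA B' (Finset.mem_filter.mp hB'm').1 (Finset.mem_filter.mp hB'm').2
        exact Set.disjoint_left.mpr (fun x hxA hxB' => hxA (hp hxB'))
      · subst h'
        have hp := hBsubA B (Finset.mem_filter.mp hBm').1 (Finset.mem_filter.mp hBm').2
        exact Set.disjoint_right.mpr (fun x hxA hxB => hxA (hp hxB))
      · exact hdisj B (Finset.mem_filter.mp hBm').1 B' (Finset.mem_filter.mp hB'm').1 hne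
    obtain ⟨G₂, sep₂, α₂, hO1₂, hO2₂, hO3₂, hO4₂, hO5₂, hO6₂, hO7₂, hO8₂⟩ :=
      ih S₂ hS₂ssub (insert Aᶜ (ℬ.filter (fun B => ¬ B ⊆ Aᶜ))) ⟨q₀, hq₀S₂⟩ hB₂ hdisj₂
    -- the joining edge
    set t₁ := α₁ A with ht₁def
    set t₂ := α₂ Aᶜ with ht₂def
    have ht₁S₁ : t₁ ∈ S₁ := (hO6₁ A (Finset.mem_insert_self _ _)).1
    have ht₂S₂ : t₂ ∈ S₂ := (hO6₂ Aᶜ (Finset.mem_insert_self _ _)).1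
    have hbound₁ : ∀ t u, G₁.Adj t u →
        (G₁.deleteEdges {s(t, u)}).Reachable u t₁ → sep₁ t u ⊆ Aᶜ :=
      fun t u h hr => (hO6₁ A (Finset.mem_insert_self _ _)).2 t u h hr
    have hbound₂ : ∀ t u, G₂.Adj t u →
        (G₂.deleteEdges {s(t, u)}).Reachable u t₂ → sep₂ t u ⊆ A := by
      intro t u h hr
      have h2 := (hO6₂ Aᶜ (Finset.mem_insert_self _ _)).2 t u h hr
      rwa [compl_compl] at h2
    have ht₁₂ : t₁ ≠ t₂ := fun h => hSdisj t₁ ht₁S₁ (h ▸ ht₂S₂)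
    have hsupp₁ : ∀ a b, G₁.Adj a b → a ∈ (↑S₁ : Set (Fin n)) ∧ b ∈ (↑S₁ : Set (Fin n)) :=
      fun a b h => ⟨Finset.mem_coe.mpr (hO1₁ a b h).1, Finset.mem_coe.mpr (hO1₁ a b h).2⟩
    have hsupp₂ : ∀ a b, G₂.Adj a b → a ∈ (↑S₂ : Set (Fin n)) ∧ b ∈ (↑S₂ : Set (Fin n)) :=
      fun a b h => ⟨Finset.mem_coe.mpr (hO1₂ a b h).1, Finset.mem_coe.mpr (hO1₂ a b h).2⟩
    have hSdisj' : ∀ x : Fin n, x ∈ (↑S₁ : Set (Fin n)) → x ∈ (↑S₂ : Set (Fin n)) → False :=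
      fun x h1 h2 => hSdisj x (Finset.mem_coe.mp h1) (Finset.mem_coe.mp h2)
    have hsupp₁d : ∀ (s : Set (Sym2 (Fin n))) a b, (G₁.deleteEdges s).Adj a b →
        a ∈ (↑S₁ : Set (Fin n)) ∧ b ∈ (↑S₁ : Set (Fin n)) := by
      intro s a b h
      rw [SimpleGraph.deleteEdges_adj] at h
      exact hsupp₁ a b h.1
    have hsupp₂d : ∀ (s : Set (Sym2 (Fin n))) a b, (G₂.deleteEdges s).Adj a b →
        a ∈ (↑S₂ : Set (Fin n)) ∧ b ∈ (↑S₂ : Set (Fin n)) := by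
      intro s a b h
      rw [SimpleGraph.deleteEdges_adj] at h
      exact hsupp₂ a b h.1
    have hmutex : ∀ a b, G₁.Adj a b → G₂.Adj a b → False :=
      fun a b h1 h2 => hSdisj a (hO1₁ a b h1).1 (hO1₂ a b h2).1
    have hbrne₁ : ∀ a b, G₁.Adj a b → s(a, b) ≠ s(t₁, t₂) := by
      intro a b h heq
      rw [Sym2.eq_iff] at heq
      rcases heq with ⟨rfl, rfl⟩ | ⟨rfl, rfl⟩
      · exact hSdisj _ (hO1₁ _ _ h).2 ht₂S₂
      · exact hSdisj _ (hO1₁ _ _ h).1 ht₂S₂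
    have hbrne₂ : ∀ a b, G₂.Adj a b → s(a, b) ≠ s(t₁, t₂) := by
      intro a b h heq
      rw [Sym2.eq_iff] at heq
      rcases heq with ⟨rfl, rfl⟩ | ⟨rfl, rfl⟩
      · exact hSdisj _ ht₁S₁ (hO1₂ _ _ h).1
      · exact hSdisj _ ht₁S₁ (hO1₂ _ _ h).2
    have hrs₁ : ∀ (s : Set (Sym2 (Fin n))) {a b : Fin n},
        (G₁.deleteEdges s).Reachable a b → a = b ∨ (a ∈ S₁ ∧ b ∈ S₁) := by
      intro s a b h
      rcases reach_support (hsupp₁d s) h with h' | ⟨h1, h2⟩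
      exacts [Or.inl h', Or.inr ⟨Finset.mem_coe.mp h1, Finset.mem_coe.mp h2⟩]
    have hrs₂ : ∀ (s : Set (Sym2 (Fin n))) {a b : Fin n},
        (G₂.deleteEdges s).Reachable a b → a = b ∨ (a ∈ S₂ ∧ b ∈ S₂) := by
      intro s a b h
      rcases reach_support (hsupp₂d s) h with h' | ⟨h1, h2⟩
      exacts [Or.inl h', Or.inr ⟨Finset.mem_coe.mp h1, Finset.mem_coe.mp h2⟩]
    set Gc := (G₁ ⊔ G₂) ⊔ SimpleGraph.fromEdgeSet {s(t₁, t₂)} with hGc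
    set sepc : Fin n → Fin n → Set E := fun a b =>
      if a = t₁ ∧ b = t₂ then Aᶜ else if a = t₂ ∧ b = t₁ then A
      else if G₁.Adj a b then sep₁ a b else sep₂ a b with hsepc
    set αc : Set E → Fin n := fun B => if B ⊆ Aᶜ then α₁ B else α₂ B with hαc
    have hGcAdj : ∀ a b, Gc.Adj a b ↔
        (G₁.Adj a b ∨ G₂.Adj a b ∨ (a = t₁ ∧ b = t₂) ∨ (a = t₂ ∧ b = t₁)) := by
      intro a b
      simp only [hGc, SimpleGraph.sup_adj, SimpleGraph.fromEdgeSet_adj,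
        Set.mem_singleton_iff, Sym2.eq_iff]
      constructor
      · rintro ((h | h) | ⟨(⟨rfl, rfl⟩ | ⟨rfl, rfl⟩), hne⟩)
        exacts [Or.inl h, Or.inr (Or.inl h), Or.inr (Or.inr (Or.inl ⟨rfl, rfl⟩)),
          Or.inr (Or.inr (Or.inr ⟨rfl, rfl⟩))]
      · rintro (h | h | ⟨rfl, rfl⟩ | ⟨rfl, rfl⟩)
        exacts [Or.inl (Or.inl h), Or.inl (Or.inr h),
          Or.inr ⟨Or.inl ⟨rfl, rfl⟩, ht₁₂⟩, Or.inr ⟨Or.inr ⟨rfl, rfl⟩, ht₁₂.symm⟩]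
    have hsepbr₁ : sepc t₁ t₂ = Aᶜ := by
      simp [hsepc]
    have hsepbr₂ : sepc t₂ t₁ = A := by
      simp [hsepc, ht₁₂, Ne.symm ht₁₂]
    have hsepG₁ : ∀ a b, G₁.Adj a b → sepc a b = sep₁ a b := by
      intro a b h
      have hc1 : ¬(a = t₁ ∧ b = t₂) := by
        rintro ⟨rfl, rfl⟩
        exact hSdisj _ (hO1₁ _ _ h).2 ht₂S₂
      have hc2 : ¬(a = t₂ ∧ b = t₁) := by
        rintro ⟨rfl, rfl⟩
        exact hSdisj _ (hO1₁ _ _ h).1 ht₂S₂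
      simp only [hsepc]
      rw [if_neg hc1, if_neg hc2, if_pos h]
    have hsepG₂ : ∀ a b, G₂.Adj a b → sepc a b = sep₂ a b := by
      intro a b h
      have hc1 : ¬(a = t₁ ∧ b = t₂) := by
        rintro ⟨rfl, -⟩
        exact hSdisj _ ht₁S₁ (hO1₂ _ _ h).1
      have hc2 : ¬(a = t₂ ∧ b = t₁) := by
        rintro ⟨-, rfl⟩
        exact hSdisj _ ht₁S₁ (hO1₂ _ _ h).2
      have hc3 : ¬ G₁.Adj a b := fun h' => hmutex a b h' h
      simp only [hsepc]
      rw [if_neg hc1, if_neg hc2, if_neg hc3]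
    have hdelA : ∀ (s : Set (Sym2 (Fin n))), s(t₁, t₂) ∉ s →
        Gc.deleteEdges s = (G₁.deleteEdges s ⊔ G₂.deleteEdges s) ⊔
          SimpleGraph.fromEdgeSet {s(t₁, t₂)} := by
      intro s hs
      ext a b
      simp only [hGc, SimpleGraph.deleteEdges_adj, SimpleGraph.sup_adj,
        SimpleGraph.fromEdgeSet_adj, Set.mem_singleton_iff]
      constructor
      · rintro ⟨((h | h) | ⟨heq, hne⟩), hns⟩
        exacts [Or.inl (Or.inl ⟨h, hns⟩), Or.inl (Or.inr ⟨h, hns⟩), Or.inr ⟨heq, hne⟩]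
      · rintro ((⟨h, hns⟩ | ⟨h, hns⟩) | ⟨heq, hne⟩)
        · exact ⟨Or.inl (Or.inl h), hns⟩
        · exact ⟨Or.inl (Or.inr h), hns⟩
        · exact ⟨Or.inr ⟨heq, hne⟩, by rw [heq]; exact hs⟩
    have hdelB : ∀ (s : Set (Sym2 (Fin n))), s(t₁, t₂) ∈ s →
        Gc.deleteEdges s = G₁.deleteEdges s ⊔ G₂.deleteEdges s := by
      intro s hs
      ext a b
      simp only [hGc, SimpleGraph.deleteEdges_adj, SimpleGraph.sup_adj,
        SimpleGraph.fromEdgeSet_adj, Set.mem_singleton_iff]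
      constructor
      · rintro ⟨((h | h) | ⟨heq, hne⟩), hns⟩
        · exact Or.inl ⟨h, hns⟩
        · exact Or.inr ⟨h, hns⟩
        · exact (hns (by rw [heq]; exact hs)).elim
      · rintro (⟨h, hns⟩ | ⟨h, hns⟩)
        exacts [⟨Or.inl (Or.inl h), hns⟩, ⟨Or.inl (Or.inr h), hns⟩]
    have hmaster : ∀ (s : Set (Sym2 (Fin n))), s(t₁, t₂) ∉ s →
        ∀ u x, (Gc.deleteEdges s).Reachable u x →
        u = x ∨ ((G₁.deleteEdges s).Reachable u x ∧ u ∈ S₁ ∧ x ∈ S₁)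
            ∨ ((G₂.deleteEdges s).Reachable u x ∧ u ∈ S₂ ∧ x ∈ S₂)
            ∨ ((G₁.deleteEdges s).Reachable u t₁ ∧ (G₂.deleteEdges s).Reachable t₂ x)
            ∨ ((G₂.deleteEdges s).Reachable u t₂ ∧ (G₁.deleteEdges s).Reachable t₁ x) := by
      intro s hs u x hr
      rw [hdelA s hs] at hr
      rcases reach_sup_edge hr with h | ⟨ha, hb⟩ | ⟨ha, hb⟩
      · rcases reach_sup_disjoint (hsupp₁d s) (hsupp₂d s) hSdisj' h with
          rfl | ⟨h1, hm1, hm2⟩ | ⟨h1, hm1, hm2⟩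
        · exact Or.inl rfl
        · exact Or.inr (Or.inl ⟨h1, Finset.mem_coe.mp hm1, Finset.mem_coe.mp hm2⟩)
        · exact Or.inr (Or.inr (Or.inl ⟨h1, Finset.mem_coe.mp hm1, Finset.mem_coe.mp hm2⟩))
      · refine Or.inr (Or.inr (Or.inr (Or.inl ⟨?_, ?_⟩)))
        · rcases reach_sup_disjoint (hsupp₁d s) (hsupp₂d s) hSdisj' ha with
            rfl | ⟨h1, -, -⟩ | ⟨-, -, hm⟩
          · exact Reachable.refl _
          · exact h1
          · exact absurd (Finset.mem_coe.mp hm) (fun hh => hSdisj t₁ ht₁S₁ hh)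
        · rcases reach_sup_disjoint (hsupp₁d s) (hsupp₂d s) hSdisj' hb with
            rfl | ⟨-, hm, -⟩ | ⟨h1, -, -⟩
          · exact Reachable.refl _
          · exact absurd (Finset.mem_coe.mp hm) (fun hh => hSdisj t₂ hh ht₂S₂)
          · exact h1
      · refine Or.inr (Or.inr (Or.inr (Or.inr ⟨?_, ?_⟩)))
        · rcases reach_sup_disjoint (hsupp₁d s) (hsupp₂d s) hSdisj' ha with
            rfl | ⟨-, -, hm⟩ | ⟨h1, -, -⟩
          · exact Reachable.refl _
          · exact absurd (Finset.mem_coe.mp hm) (fun hh => hSdisj t₂ hh ht₂S₂)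
          · exact h1
        · rcases reach_sup_disjoint (hsupp₁d s) (hsupp₂d s) hSdisj' hb with
            rfl | ⟨h1, -, -⟩ | ⟨-, hm, -⟩
          · exact Reachable.refl _
          · exact h1
          · exact absurd (Finset.mem_coe.mp hm) (fun hh => hSdisj t₁ ht₁S₁ hh)
    have hlinkA : ∀ {Y : Set E}, Yᶜ ⊆ A → Aᶜ ⊆ Y := by
      intro Y h z hz
      by_contra hzc
      exact hz (h hzc)
    have hlinkA' : ∀ {Y : Set E}, Yᶜ ⊆ Aᶜ → A ⊆ Y := by
      intro Y h z hz
      by_contra hzc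
      exact (h hzc) hz
    -- now the combined object
    refine ⟨Gc, sepc, αc, ?_, ?_, ?_, ?_, ?_, ?_, ?_, ?_⟩
    · -- O1 : edges within S
      intro t u hadj
      rcases (hGcAdj t u).mp hadj with h | h | ⟨rfl, rfl⟩ | ⟨rfl, rfl⟩
      · exact ⟨hS₁sub (hO1₁ t u h).1, hS₁sub (hO1₁ t u h).2⟩
      · exact ⟨hS₂sub (hO1₂ t u h).1, hS₂sub (hO1₂ t u h).2⟩
      · exact ⟨hS₁sub ht₁S₁, hS₂sub ht₂S₂⟩
      · exact ⟨hS₂sub ht₂S₂, hS₁sub ht₁S₁⟩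
    · -- O2 : connectivity on S
      have hle₁ : G₁ ≤ Gc := by
        rw [hGc]
        exact le_trans le_sup_left le_sup_left
      have hle₂ : G₂ ≤ Gc := by
        rw [hGc]
        exact le_trans le_sup_right le_sup_left
      have hreach₁ : ∀ a ∈ S₁, ∀ b ∈ S₁, Gc.Reachable a b :=
        fun a ha b hb => (hO2₁ a ha b hb).mono hle₁
      have hreach₂ : ∀ a ∈ S₂, ∀ b ∈ S₂, Gc.Reachable a b :=
        fun a ha b hb => (hO2₂ a ha b hb).mono hle₂
      have hbradj : Gc.Adj t₁ t₂ := (hGcAdj _ _).mpr (Or.inr (Or.inr (Or.inl ⟨rfl, rfl⟩)))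
      intro t ht u hu
      rcases hS12 t ht with h1 | h1 <;> rcases hS12 u hu with h2 | h2
      · exact hreach₁ t h1 u h2
      · exact ((hreach₁ t h1 t₁ ht₁S₁).trans hbradj.reachable).trans (hreach₂ t₂ ht₂S₂ u h2)
      · exact ((hreach₂ t h1 t₂ ht₂S₂).trans hbradj.reachable.symm).trans
          (hreach₁ t₁ ht₁S₁ u h2)
      · exact hreach₂ t h1 u h2
    · -- O3 : acyclicity
      have hacsup : (G₁ ⊔ G₂).IsAcyclic := acyclic_sup hsupp₁ hsupp₂ hSdisj' hO3₁ hO3₂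
      have hnr : ¬ (G₁ ⊔ G₂).Reachable t₁ t₂ := by
        intro h
        rcases reach_sup_disjoint hsupp₁ hsupp₂ hSdisj' h with h' | ⟨-, -, hm⟩ | ⟨-, hm, -⟩
        · exact ht₁₂ h'
        · exact hSdisj t₂ (Finset.mem_coe.mp hm) ht₂S₂
        · exact hSdisj t₁ ht₁S₁ (Finset.mem_coe.mp hm)
      show Gc.IsAcyclic
      rw [hGc]
      exact acyclic_add_edge ht₁₂ hnr hacsup
    · -- O4 : complementary sides
      intro t u hadj
      rcases (hGcAdj t u).mp hadj with h | h | ⟨rfl, rfl⟩ | ⟨rfl, rfl⟩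
      · rw [hsepG₁ u t h.symm, hsepG₁ t u h]
        exact hO4₁ t u h
      · rw [hsepG₂ u t h.symm, hsepG₂ t u h]
        exact hO4₂ t u h
      · rw [hsepbr₂, hsepbr₁, compl_compl]
      · rw [hsepbr₁, hsepbr₂]
    · -- O5 : compatibility
      intro t u x y hadj₁ hadj₂ hne hreach
      rcases (hGcAdj t u).mp hadj₁ with h1 | h1 | ⟨rfl, rfl⟩ | ⟨rfl, rfl⟩ <;>
        rcases (hGcAdj x y).mp hadj₂ with h2 | h2 | ⟨rfl, rfl⟩ | ⟨rfl, rfl⟩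
      · -- (G₁, G₁)
        have hbr : s(t₁, t₂) ∉ ({s(t, u), s(x, y)} : Set (Sym2 (Fin n))) := by
          intro hm
          rcases Set.mem_insert_iff.mp hm with h' | h'
          · exact hbrne₁ t u h1 h'.symm
          · exact hbrne₁ x y h2 (Set.mem_singleton_iff.mp h').symm
        rw [hsepG₁ t u h1, hsepG₁ x y h2]
        rcases hmaster _ hbr u x hreach with rfl | ⟨hr, -, -⟩ | ⟨-, hm, -⟩ | ⟨-, hr2⟩ | ⟨hr1, -⟩
        · exact hO5₁ _ _ _ _ h1 h2 hne (Reachable.refl _)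
        · exact hO5₁ t u x y h1 h2 hne hr
        · exact (hSdisj u (hO1₁ t u h1).2 hm).elim
        · rcases hrs₂ _ hr2 with h' | ⟨-, hm⟩
          · exact (hSdisj x (hO1₁ x y h2).1 (by rw [← h']; exact ht₂S₂)).elim
          · exact (hSdisj x (hO1₁ x y h2).1 hm).elim
        · rcases hrs₂ _ hr1 with h' | ⟨hm, -⟩
          · exact (hSdisj u (hO1₁ t u h1).2 (by rw [h']; exact ht₂S₂)).elim
          · exact (hSdisj u (hO1₁ t u h1).2 hm).elim
      · -- (G₁, G₂)
        have hbr : s(t₁, t₂) ∉ ({s(t, u), s(x, y)} : Set (Sym2 (Fin n))) := by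
          intro hm
          rcases Set.mem_insert_iff.mp hm with h' | h'
          · exact hbrne₁ t u h1 h'.symm
          · exact hbrne₂ x y h2 (Set.mem_singleton_iff.mp h').symm
        rw [hsepG₁ t u h1, hsepG₂ x y h2]
        rcases hmaster _ hbr u x hreach with rfl | ⟨-, -, hm⟩ | ⟨-, hm, -⟩ | ⟨hr1, hr2⟩ | ⟨hr1, -⟩
        · exact (hSdisj _ (hO1₁ _ _ h1).2 (hO1₂ _ _ h2).1).elim
        · exact (hSdisj x hm (hO1₂ x y h2).1).elim
        · exact (hSdisj u (hO1₁ t u h1).2 hm).elim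
        · have hA1' : sep₁ t u ⊆ Aᶜ :=
            hbound₁ t u h1 (hr1.mono (TangleAux.deleteEdges_anti
              (Set.singleton_subset_iff.mpr (Set.mem_insert _ _))))
          have hA2' : sep₂ y x ⊆ A := by
            apply hbound₂ y x h2.symm
            have hsw : ({s(y, x)} : Set (Sym2 (Fin n))) ⊆ {s(t, u), s(x, y)} :=
              Set.singleton_subset_iff.mpr (Set.mem_insert_iff.mpr
                (Or.inr (Set.mem_singleton_iff.mpr Sym2.eq_swap)))
            exact (hr2.mono (TangleAux.deleteEdges_anti hsw)).symm
          have hcompl : (sep₂ x y)ᶜ ⊆ A := by rw [← hO4₂ x y h2]; exact hA2'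
          exact fun z hz => hlinkA hcompl (hA1' hz)
        · rcases hrs₂ _ hr1 with h' | ⟨hm, -⟩
          · exact (hSdisj u (hO1₁ t u h1).2 (by rw [h']; exact ht₂S₂)).elim
          · exact (hSdisj u (hO1₁ t u h1).2 hm).elim
      · -- (G₁, bridge t₁t₂)
        rw [hsepG₁ t u h1, hsepbr₁]
        have hbrm : s(t₁, t₂) ∈ ({s(t, u), s(t₁, t₂)} : Set (Sym2 (Fin n))) :=
          Set.mem_insert_iff.mpr (Or.inr rfl)
        rw [hdelB _ hbrm] at hreach
        rcases reach_sup_disjoint (hsupp₁d _) (hsupp₂d _) hSdisj' hreach with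
          h' | ⟨hr, -, -⟩ | ⟨-, hm, -⟩
        · exact hbound₁ t u h1 (by rw [h'])
        · exact hbound₁ t u h1 (hr.mono (TangleAux.deleteEdges_anti
            (Set.singleton_subset_iff.mpr (Set.mem_insert _ _))))
        · exact (hSdisj u (hO1₁ t u h1).2 (Finset.mem_coe.mp hm)).elim
      · -- (G₁, bridge t₂t₁) : impossible configuration
        have hbrm : s(t₁, t₂) ∈ ({s(t, u), s(t₂, t₁)} : Set (Sym2 (Fin n))) :=
          Set.mem_insert_iff.mpr (Or.inr (Set.mem_singleton_iff.mpr Sym2.eq_swap))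
        rw [hdelB _ hbrm] at hreach
        rcases reach_sup_disjoint (hsupp₁d _) (hsupp₂d _) hSdisj' hreach with
          h' | ⟨-, -, hm⟩ | ⟨-, hm, -⟩
        · exact (hSdisj u (hO1₁ t u h1).2 (by rw [h']; exact ht₂S₂)).elim
        · exact (hSdisj t₂ (Finset.mem_coe.mp hm) ht₂S₂).elim
        · exact (hSdisj u (hO1₁ t u h1).2 (Finset.mem_coe.mp hm)).elim
      · -- (G₂, G₁)
        have hbr : s(t₁, t₂) ∉ ({s(t, u), s(x, y)} : Set (Sym2 (Fin n))) := by
          intro hm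
          rcases Set.mem_insert_iff.mp hm with h' | h'
          · exact hbrne₂ t u h1 h'.symm
          · exact hbrne₁ x y h2 (Set.mem_singleton_iff.mp h').symm
        rw [hsepG₂ t u h1, hsepG₁ x y h2]
        rcases hmaster _ hbr u x hreach with rfl | ⟨-, hm, -⟩ | ⟨-, -, hm⟩ | ⟨hr1, -⟩ | ⟨hr1, hr2⟩
        · exact (hSdisj _ (hO1₁ _ _ h2).1 (hO1₂ _ _ h1).2).elim
        · exact (hSdisj u hm (hO1₂ t u h1).2).elim
        · exact (hSdisj x (hO1₁ x y h2).1 hm).elim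
        · rcases hrs₁ _ hr1 with h' | ⟨hm, -⟩
          · exact (hSdisj u (by rw [h']; exact ht₁S₁) (hO1₂ t u h1).2).elim
          · exact (hSdisj u hm (hO1₂ t u h1).2).elim
        · have hA1' : sep₂ t u ⊆ A :=
            hbound₂ t u h1 (hr1.mono (TangleAux.deleteEdges_anti
              (Set.singleton_subset_iff.mpr (Set.mem_insert _ _))))
          have hA2' : sep₁ y x ⊆ Aᶜ := by
            apply hbound₁ y x h2.symm
            have hsw : ({s(y, x)} : Set (Sym2 (Fin n))) ⊆ {s(t, u), s(x, y)} :=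
              Set.singleton_subset_iff.mpr (Set.mem_insert_iff.mpr
                (Or.inr (Set.mem_singleton_iff.mpr Sym2.eq_swap)))
            exact (hr2.mono (TangleAux.deleteEdges_anti hsw)).symm
          have hcompl : (sep₁ x y)ᶜ ⊆ Aᶜ := by rw [← hO4₁ x y h2]; exact hA2'
          exact fun z hz => hlinkA' hcompl (hA1' hz)
      · -- (G₂, G₂)
        have hbr : s(t₁, t₂) ∉ ({s(t, u), s(x, y)} : Set (Sym2 (Fin n))) := by
          intro hm
          rcases Set.mem_insert_iff.mp hm with h' | h'
          · exact hbrne₂ t u h1 h'.symm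
          · exact hbrne₂ x y h2 (Set.mem_singleton_iff.mp h').symm
        rw [hsepG₂ t u h1, hsepG₂ x y h2]
        rcases hmaster _ hbr u x hreach with rfl | ⟨-, hm, -⟩ | ⟨hr, -, -⟩ | ⟨hr1, -⟩ | ⟨-, hr2⟩
        · exact hO5₂ _ _ _ _ h1 h2 hne (Reachable.refl _)
        · exact (hSdisj u hm (hO1₂ t u h1).2).elim
        · exact hO5₂ t u x y h1 h2 hne hr
        · rcases hrs₁ _ hr1 with h' | ⟨hm, -⟩
          · exact (hSdisj u (by rw [h']; exact ht₁S₁) (hO1₂ t u h1).2).elim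
          · exact (hSdisj u hm (hO1₂ t u h1).2).elim
        · rcases hrs₁ _ hr2 with h' | ⟨-, hm⟩
          · exact (hSdisj x (by rw [← h']; exact ht₁S₁) (hO1₂ x y h2).1).elim
          · exact (hSdisj x hm (hO1₂ x y h2).1).elim
      · -- (G₂, bridge t₁t₂) : impossible
        have hbrm : s(t₁, t₂) ∈ ({s(t, u), s(t₁, t₂)} : Set (Sym2 (Fin n))) :=
          Set.mem_insert_iff.mpr (Or.inr rfl)
        rw [hdelB _ hbrm] at hreach
        rcases reach_sup_disjoint (hsupp₁d _) (hsupp₂d _) hSdisj' hreach with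
          h' | ⟨-, hm, -⟩ | ⟨-, -, hm⟩
        · exact (hSdisj t₁ ht₁S₁ (by rw [← h']; exact (hO1₂ t u h1).2)).elim
        · exact (hSdisj u (Finset.mem_coe.mp hm) (hO1₂ t u h1).2).elim
        · exact (hSdisj t₁ ht₁S₁ (Finset.mem_coe.mp hm)).elim
      · -- (G₂, bridge t₂t₁)
        rw [hsepG₂ t u h1, hsepbr₂]
        have hbrm : s(t₁, t₂) ∈ ({s(t, u), s(t₂, t₁)} : Set (Sym2 (Fin n))) :=
          Set.mem_insert_iff.mpr (Or.inr (Set.mem_singleton_iff.mpr Sym2.eq_swap))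
        rw [hdelB _ hbrm] at hreach
        rcases reach_sup_disjoint (hsupp₁d _) (hsupp₂d _) hSdisj' hreach with
          h' | ⟨-, hm, -⟩ | ⟨hr, -, -⟩
        · exact hbound₂ t u h1 (by rw [h'])
        · exact (hSdisj u (Finset.mem_coe.mp hm) (hO1₂ t u h1).2).elim
        · exact hbound₂ t u h1 (hr.mono (TangleAux.deleteEdges_anti
            (Set.singleton_subset_iff.mpr (Set.mem_insert _ _))))
      · -- (bridge t₁t₂, G₁) : impossible
        have hbrm : s(t₁, t₂) ∈ ({s(t₁, t₂), s(x, y)} : Set (Sym2 (Fin n))) :=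
          Set.mem_insert _ _
        rw [hdelB _ hbrm] at hreach
        rcases reach_sup_disjoint (hsupp₁d _) (hsupp₂d _) hSdisj' hreach with
          h' | ⟨-, hm, -⟩ | ⟨-, -, hm⟩
        · exact (hSdisj x (hO1₁ x y h2).1 (by rw [← h']; exact ht₂S₂)).elim
        · exact (hSdisj t₂ (Finset.mem_coe.mp hm) ht₂S₂).elim
        · exact (hSdisj x (hO1₁ x y h2).1 (Finset.mem_coe.mp hm)).elim
      · -- (bridge t₁t₂, G₂)
        rw [hsepbr₁, hsepG₂ x y h2]
        have hbrm : s(t₁, t₂) ∈ ({s(t₁, t₂), s(x, y)} : Set (Sym2 (Fin n))) :=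
          Set.mem_insert _ _
        rw [hdelB _ hbrm] at hreach
        have hfin : sep₂ y x ⊆ A → Aᶜ ⊆ sep₂ x y := by
          intro hh
          have hcompl : (sep₂ x y)ᶜ ⊆ A := by rw [← hO4₂ x y h2]; exact hh
          exact hlinkA hcompl
        rcases reach_sup_disjoint (hsupp₁d _) (hsupp₂d _) hSdisj' hreach with
          h' | ⟨-, hm, -⟩ | ⟨hr, -, -⟩
        · exact hfin (hbound₂ y x h2.symm (by rw [← h']))
        · exact (hSdisj t₂ (Finset.mem_coe.mp hm) ht₂S₂).elim
        · exact hfin (hbound₂ y x h2.symm ((hr.mono (TangleAux.deleteEdges_anti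
            (Set.singleton_subset_iff.mpr (Set.mem_insert_iff.mpr
              (Or.inr (Set.mem_singleton_iff.mpr Sym2.eq_swap)))))).symm))
      · -- (bridge, bridge) same orientation
        exact absurd rfl hne
      · -- (bridge t₁t₂, bridge t₂t₁)
        exact absurd Sym2.eq_swap hne
      · -- (bridge t₂t₁, G₁)
        rw [hsepbr₂, hsepG₁ x y h2]
        have hbrm : s(t₁, t₂) ∈ ({s(t₂, t₁), s(x, y)} : Set (Sym2 (Fin n))) :=
          Set.mem_insert_iff.mpr (Or.inl Sym2.eq_swap)
        rw [hdelB _ hbrm] at hreach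
        have hfin : sep₁ y x ⊆ Aᶜ → A ⊆ sep₁ x y := by
          intro hh
          have hcompl : (sep₁ x y)ᶜ ⊆ Aᶜ := by rw [← hO4₁ x y h2]; exact hh
          exact hlinkA' hcompl
        rcases reach_sup_disjoint (hsupp₁d _) (hsupp₂d _) hSdisj' hreach with
          h' | ⟨hr, -, -⟩ | ⟨-, hm, -⟩
        · exact hfin (hbound₁ y x h2.symm (by rw [← h']))
        · exact hfin (hbound₁ y x h2.symm ((hr.mono (TangleAux.deleteEdges_anti
            (Set.singleton_subset_iff.mpr (Set.mem_insert_iff.mpr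
              (Or.inr (Set.mem_singleton_iff.mpr Sym2.eq_swap)))))).symm))
        · exact (hSdisj t₁ ht₁S₁ (Finset.mem_coe.mp hm)).elim
      · -- (bridge t₂t₁, G₂) : impossible
        have hbrm : s(t₁, t₂) ∈ ({s(t₂, t₁), s(x, y)} : Set (Sym2 (Fin n))) :=
          Set.mem_insert_iff.mpr (Or.inl Sym2.eq_swap)
        rw [hdelB _ hbrm] at hreach
        rcases reach_sup_disjoint (hsupp₁d _) (hsupp₂d _) hSdisj' hreach with
          h' | ⟨-, -, hm⟩ | ⟨-, hm, -⟩
        · exact (hSdisj x (by rw [← h']; exact ht₁S₁) (hO1₂ x y h2).1).elim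
        · exact (hSdisj x (Finset.mem_coe.mp hm) (hO1₂ x y h2).1).elim
        · exact (hSdisj t₁ ht₁S₁ (Finset.mem_coe.mp hm)).elim
      · -- (bridge t₂t₁, bridge t₁t₂)
        exact absurd Sym2.eq_swap hne
      · -- (bridge t₂t₁, bridge t₂t₁)
        exact absurd rfl hne
    · -- O6 : boundary compatibility
      intro B hBm
      by_cases hBside : B ⊆ Aᶜ
      · have hBm₁ : B ∈ insert A (ℬ.filter (fun B => B ⊆ Aᶜ)) :=
          Finset.mem_insert_of_mem (Finset.mem_filter.mpr ⟨hBm, hBside⟩)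
        have hα : αc B = α₁ B := by simp only [hαc]; rw [if_pos hBside]
        have hAB : A ⊆ Bᶜ := fun z hz hzB => (hBside hzB) hz
        refine ⟨?_, ?_⟩
        · rw [hα]; exact hS₁sub (hO6₁ B hBm₁).1
        · intro t u hadj hreach
          rw [hα] at hreach
          rcases (hGcAdj t u).mp hadj with h1 | h1 | ⟨rfl, rfl⟩ | ⟨rfl, rfl⟩
          · rw [hsepG₁ t u h1]
            have hbr : s(t₁, t₂) ∉ ({s(t, u)} : Set (Sym2 (Fin n))) :=
              fun hm => hbrne₁ t u h1 (Set.mem_singleton_iff.mp hm).symm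
            rcases hmaster _ hbr u (α₁ B) hreach with
              h' | ⟨hr, -, -⟩ | ⟨-, hm, -⟩ | ⟨-, hr2⟩ | ⟨hr1, -⟩
            · exact (hO6₁ B hBm₁).2 t u h1 (by rw [h'])
            · exact (hO6₁ B hBm₁).2 t u h1 hr
            · exact (hSdisj u (hO1₁ t u h1).2 hm).elim
            · rcases hrs₂ _ hr2 with h' | ⟨-, hm⟩
              · exact (hSdisj (α₁ B) (hO6₁ B hBm₁).1 (by rw [← h']; exact ht₂S₂)).elim
              · exact (hSdisj (α₁ B) (hO6₁ B hBm₁).1 hm).elim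
            · rcases hrs₂ _ hr1 with h' | ⟨hm, -⟩
              · exact (hSdisj u (hO1₁ t u h1).2 (by rw [h']; exact ht₂S₂)).elim
              · exact (hSdisj u (hO1₁ t u h1).2 hm).elim
          · rw [hsepG₂ t u h1]
            have hbr : s(t₁, t₂) ∉ ({s(t, u)} : Set (Sym2 (Fin n))) :=
              fun hm => hbrne₂ t u h1 (Set.mem_singleton_iff.mp hm).symm
            rcases hmaster _ hbr u (α₁ B) hreach with
              h' | ⟨-, hm, -⟩ | ⟨-, -, hm⟩ | ⟨hr1, -⟩ | ⟨hr1, -⟩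
            · exact (hSdisj (α₁ B) (hO6₁ B hBm₁).1 (by rw [← h']; exact (hO1₂ t u h1).2)).elim
            · exact (hSdisj u hm (hO1₂ t u h1).2).elim
            · exact (hSdisj (α₁ B) (hO6₁ B hBm₁).1 hm).elim
            · rcases hrs₁ _ hr1 with h' | ⟨hm, -⟩
              · exact (hSdisj u (by rw [h']; exact ht₁S₁) (hO1₂ t u h1).2).elim
              · exact (hSdisj u hm (hO1₂ t u h1).2).elim
            · exact (hbound₂ t u h1 hr1).trans hAB
          · have hbrm : s(t₁, t₂) ∈ ({s(t₁, t₂)} : Set (Sym2 (Fin n))) := rfl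
            rw [hdelB _ hbrm] at hreach
            rcases reach_sup_disjoint (hsupp₁d _) (hsupp₂d _) hSdisj' hreach with
              h' | ⟨-, hm, -⟩ | ⟨-, -, hm⟩
            · exact (hSdisj (α₁ B) (hO6₁ B hBm₁).1 (by rw [← h']; exact ht₂S₂)).elim
            · exact (hSdisj t₂ (Finset.mem_coe.mp hm) ht₂S₂).elim
            · exact (hSdisj (α₁ B) (hO6₁ B hBm₁).1 (Finset.mem_coe.mp hm)).elim
          · rw [hsepbr₂]
            exact hAB
      · have hBA : B ⊆ A := hBsubA B hBm hBside
        have hBm₂ : B ∈ insert Aᶜ (ℬ.filter (fun B => ¬ B ⊆ Aᶜ)) :=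
          Finset.mem_insert_of_mem (Finset.mem_filter.mpr ⟨hBm, hBside⟩)
        have hα : αc B = α₂ B := by simp only [hαc]; rw [if_neg hBside]
        have hAcB : Aᶜ ⊆ Bᶜ := Set.compl_subset_compl.mpr hBA
        refine ⟨?_, ?_⟩
        · rw [hα]; exact hS₂sub (hO6₂ B hBm₂).1
        · intro t u hadj hreach
          rw [hα] at hreach
          rcases (hGcAdj t u).mp hadj with h1 | h1 | ⟨rfl, rfl⟩ | ⟨rfl, rfl⟩
          · rw [hsepG₁ t u h1]
            have hbr : s(t₁, t₂) ∉ ({s(t, u)} : Set (Sym2 (Fin n))) :=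
              fun hm => hbrne₁ t u h1 (Set.mem_singleton_iff.mp hm).symm
            rcases hmaster _ hbr u (α₂ B) hreach with
              h' | ⟨-, -, hm⟩ | ⟨-, hm, -⟩ | ⟨hr1, -⟩ | ⟨hr1, -⟩
            · exact (hSdisj u (hO1₁ t u h1).2 (by rw [h']; exact (hO6₂ B hBm₂).1)).elim
            · exact (hSdisj (α₂ B) hm (hO6₂ B hBm₂).1).elim
            · exact (hSdisj u (hO1₁ t u h1).2 hm).elim
            · exact (hbound₁ t u h1 hr1).trans hAcB
            · rcases hrs₂ _ hr1 with h' | ⟨hm, -⟩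
              · exact (hSdisj u (hO1₁ t u h1).2 (by rw [h']; exact ht₂S₂)).elim
              · exact (hSdisj u (hO1₁ t u h1).2 hm).elim
          · rw [hsepG₂ t u h1]
            have hbr : s(t₁, t₂) ∉ ({s(t, u)} : Set (Sym2 (Fin n))) :=
              fun hm => hbrne₂ t u h1 (Set.mem_singleton_iff.mp hm).symm
            rcases hmaster _ hbr u (α₂ B) hreach with
              h' | ⟨-, hm, -⟩ | ⟨hr, -, -⟩ | ⟨hr1, -⟩ | ⟨-, hr2⟩
            · exact (hO6₂ B hBm₂).2 t u h1 (by rw [h'])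
            · exact (hSdisj u hm (hO1₂ t u h1).2).elim
            · exact (hO6₂ B hBm₂).2 t u h1 hr
            · rcases hrs₁ _ hr1 with h' | ⟨hm, -⟩
              · exact (hSdisj u (by rw [h']; exact ht₁S₁) (hO1₂ t u h1).2).elim
              · exact (hSdisj u hm (hO1₂ t u h1).2).elim
            · rcases hrs₁ _ hr2 with h' | ⟨-, hm⟩
              · exact (hSdisj (α₂ B) (by rw [← h']; exact ht₁S₁) (hO6₂ B hBm₂).1).elim
              · exact (hSdisj (α₂ B) hm (hO6₂ B hBm₂).1).elim
          · rw [hsepbr₁]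
            exact hAcB
          · have hbrm : s(t₁, t₂) ∈ ({s(t₂, t₁)} : Set (Sym2 (Fin n))) :=
              Set.mem_singleton_iff.mpr Sym2.eq_swap
            rw [hdelB _ hbrm] at hreach
            rcases reach_sup_disjoint (hsupp₁d _) (hsupp₂d _) hSdisj' hreach with
              h' | ⟨-, -, hm⟩ | ⟨-, hm, -⟩
            · exact (hSdisj (α₂ B) (by rw [← h']; exact ht₁S₁) (hO6₂ B hBm₂).1).elim
            · exact (hSdisj (α₂ B) (Finset.mem_coe.mp hm) (hO6₂ B hBm₂).1).elim
            · exact (hSdisj t₁ ht₁S₁ (Finset.mem_coe.mp hm)).elim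
    · -- O7 : homes
      intro t u hadj
      rcases (hGcAdj t u).mp hadj with h | h | ⟨rfl, rfl⟩ | ⟨rfl, rfl⟩
      · rw [hsepG₁ u t h.symm]
        exact hO7₁ t u h
      · rw [hsepG₂ u t h.symm]
        exact hO7₂ t u h
      · rw [hsepbr₂]
        exact hS₁mem t₁ ht₁S₁
      · rw [hsepbr₁]
        exact hS₂mem t₂ ht₂S₂
    · -- O8 : efficient distinguishing
      intro p hp q hq hne
      rcases hS12 p hp with h1 | h1 <;> rcases hS12 q hq with h2 | h2
      · obtain ⟨t, u, hadj, heff⟩ := hO8₁ p h1 q h2 hne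
        exact ⟨t, u, (hGcAdj t u).mpr (Or.inl hadj), by rw [hsepG₁ t u hadj]; exact heff⟩
      · refine ⟨t₁, t₂, (hGcAdj _ _).mpr (Or.inr (Or.inr (Or.inl ⟨rfl, rfl⟩))), ?_⟩
        rw [hsepbr₁]
        constructor
        · exact Or.inr ⟨by rw [compl_compl]; exact hS₁mem p h1, hS₂mem q h2⟩
        · intro D hD
          rw [fcompl hsym]
          exact hAmin p hp q hq hne D hD
      · refine ⟨t₂, t₁, (hGcAdj _ _).mpr (Or.inr (Or.inr (Or.inr ⟨rfl, rfl⟩))), ?_⟩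
        rw [hsepbr₂]
        constructor
        · exact Or.inr ⟨hS₂mem p h1, hS₁mem q h2⟩
        · exact fun D hD => hAmin p hp q hq hne D hD
      · obtain ⟨t, u, hadj, heff⟩ := hO8₂ p h1 q h2 hne
        exact ⟨t, u, (hGcAdj t u).mpr (Or.inr (Or.inl hadj)), by rw [hsepG₂ t u hadj]; exact heff⟩

end TangleRec


/-- There is a tree-decomposition distinguishing any two (distinct) maximal
tangles efficiently such that in each of its parts lives a maximal tangle:
for every vertex `t` there is a maximal tangle orienting every separation
corresponding to an edge at `t` towards the `t`-side. -/
theorem stmt_19 [Fintype E] (f : Set E → ℤ) (hsym : FSymm f) (hsub : FSubmod f) :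
    ∃ (V : Type) (_ : Fintype V) (G : SimpleGraph V) (P : V → Set E),
      G.IsTree ∧ IsPartitionFam P ∧
      (∀ P' Q : Set (Set E), IsMaximalTangle f P' → IsMaximalTangle f Q →
        P' ≠ Q → ∃ t u, G.Adj t u ∧ DistinguishesEff f (treeSide G P t u) P' Q) ∧
      (∀ t : V, ∃ Q : Set (Set E), IsMaximalTangle f Q ∧
        ∀ u : V, G.Adj t u → treeSide G P u t ∈ Q) := by
  classical
  obtain ⟨T₀, hT₀⟩ := TangleAux3.exists_maximal_tangle f
  have hne : Nonempty {T : Set (Set E) // IsMaximalTangle f T} := ⟨⟨T₀, hT₀⟩⟩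
  have hfin : Finite {T : Set (Set E) // IsMaximalTangle f T} := by
    have h1 : Finite (Set (Set E)) := inferInstance
    exact Subtype.finite
  set n := Nat.card {T : Set (Set E) // IsMaximalTangle f T} with hn
  have e : {T : Set (Set E) // IsMaximalTangle f T} ≃ Fin n := Finite.equivFin _
  haveI hnfin : Nonempty (Fin n) := ⟨e hne.some⟩
  set τ : Fin n → Set (Set E) := fun i => (e.symm i).val with hτdef
  have hτ : ∀ i, IsMaximalTangle f (τ i) := fun i => (e.symm i).2
  have hτinj : Function.Injective τ :=
    fun i j h => e.symm.injective (Subtype.ext h)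
  obtain ⟨G, sep, α, hO1, hO2, hO3, hO4, hO5, hO6, hO7, hO8⟩ :=
    TangleRec.rec_main hsym hsub τ hτ hτinj Finset.univ ∅ Finset.univ_nonempty
      (fun B h => absurd h (Finset.notMem_empty B))
      (fun B h => absurd h (Finset.notMem_empty B))
  have hpre : G.Preconnected := fun a b => hO2 a (Finset.mem_univ _) b (Finset.mem_univ _)
  have hconn : G.Connected := by
    rw [SimpleGraph.connected_iff]
    exact ⟨hpre, hnfin⟩
  have hpart := TangleAux2.isPartitionFam_partFun (E := E) hpre hO3 hO4 hO5
  have htreeSide : ∀ t u, G.Adj t u →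
      treeSide G (TangleAux2.partFun G sep) t u = sep t u := by
    intro t u hadj
    exact TangleAux2.treeSide_aux hpre hO3 hO4 hO5 hadj
  refine ⟨Fin n, inferInstance, G, TangleAux2.partFun G sep, ⟨hconn, hO3⟩,
    ⟨hpart.1, hpart.2⟩, ?_, ?_⟩
  · intro P' Q hP' hQ hPQ
    set p := e ⟨P', hP'⟩ with hp
    set q := e ⟨Q, hQ⟩ with hq
    have hτp : τ p = P' := congrArg Subtype.val (e.symm_apply_apply ⟨P', hP'⟩)
    have hτq : τ q = Q := congrArg Subtype.val (e.symm_apply_apply ⟨Q, hQ⟩)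
    have hpq : p ≠ q := by
      intro h
      apply hPQ
      rw [← hτp, ← hτq, h]
    obtain ⟨t, u, hadj, heff⟩ := hO8 p (Finset.mem_univ _) q (Finset.mem_univ _) hpq
    refine ⟨t, u, hadj, ?_⟩
    rw [htreeSide t u hadj, ← hτp, ← hτq]
    exact heff
  · intro t
    refine ⟨τ t, hτ t, ?_⟩
    intro u hadj
    rw [htreeSide u t hadj.symm]
    exact hO7 t u hadj
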